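/- arXiv:2507.15829 — 5 statements merged into one kernel-verified Lean document; each statement's English description precedes it below -/
import Mathlib

section
/- Under the uniform connectivity assumption with constant λ > 0, if B ∈ ℝ^{N×N} is symmetric with B_{ij} ≥ r on edges and 0 otherwise, and the sources S^N ∈ ℝ^N_0 are given by S_i^N = ∫_{I_i^N} σ(x) dx for σ ∈ L^2_0([0,1]), then the unique zero-sum solution P of the Kirchhoff law −(1/N^2) ∑_j W^N_{ij} B_{ij} (P_j − P_i) = S_i^N satisfies ∑_{i,j} (P_i − P_j)^2 ≤ (8N^2/(rλ)^2) ∫_0^1 σ(x)^2 dx. -/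
open MeasureTheory Set Filter

noncomputable def μI : Measure ℝ := volume.restrict (Set.Icc 0 1)

lemma kh_cs (σ : ℝ → ℝ) (hσ : MemLp σ 2 μI) {a b : ℝ} (hab : a ≤ b)
    (hsub : Set.Icc a b ⊆ Set.Icc (0:ℝ) 1) :
    (∫ x in Set.Icc a b, σ x) ^ 2 ≤ (b - a) * ∫ x in Set.Icc a b, σ x ^ 2 := by
  set ν := volume.restrict (Set.Icc a b) with hν
  have hνeq : ν = μI.restrict (Set.Icc a b) := by
    rw [μI, Measure.restrict_restrict measurableSet_Icc,
      Set.inter_eq_self_of_subset_left hsub]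
  have hfin : IsFiniteMeasure ν := by
    constructor
    rw [hν, Measure.restrict_apply_univ]
    exact measure_Icc_lt_top
  have hmem : MemLp σ 2 ν := by rw [hνeq]; exact hσ.restrict _
  have hone : MemLp (fun _ : ℝ => (1:ℝ)) 2 ν := memLp_const 1
  have h2 : Real.HolderConjugate 2 2 := Real.HolderConjugate.two_two
  have hof : (ENNReal.ofReal (2:ℝ)) = 2 := by norm_num
  have hH := integral_mul_norm_le_Lp_mul_Lq (μ := ν) h2 (hof ▸ hmem) (hof ▸ hone)
  have hrw : ∀ x : ℝ, ‖x‖ ^ (2:ℝ) = x ^ 2 := by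
    intro x
    rw [show (2:ℝ) = ((2:ℕ):ℝ) by norm_num, Real.rpow_natCast]
    simp [sq_abs]
  have hA0 : 0 ≤ ∫ x, σ x ^ 2 ∂ν := integral_nonneg fun x => sq_nonneg _
  have hba : 0 ≤ b - a := sub_nonneg.2 hab
  have hL : |∫ x, σ x ∂ν| ≤ ∫ x, ‖σ x‖ * ‖(1:ℝ)‖ ∂ν := by
    simpa using (norm_integral_le_integral_norm (μ := ν) σ)
  have hRf : ∫ x, ‖σ x‖ ^ (2:ℝ) ∂ν = ∫ x, σ x ^ 2 ∂ν := by
    simp_rw [hrw]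
  have hRg : ∫ x, ‖(1:ℝ)‖ ^ (2:ℝ) ∂ν = b - a := by
    simp_rw [hrw]
    simp [hν, Real.volume_Icc, ENNReal.toReal_ofReal hba, hab]
  rw [hRf, hRg] at hH
  have hsqrt : (∫ x, σ x ^ 2 ∂ν) ^ (1/(2:ℝ)) * (b - a) ^ (1/(2:ℝ))
      = Real.sqrt ((∫ x, σ x ^ 2 ∂ν) * (b - a)) := by
    rw [Real.sqrt_eq_rpow, Real.mul_rpow hA0 hba]
  have habs : |∫ x, σ x ∂ν| ≤ Real.sqrt ((∫ x, σ x ^ 2 ∂ν) * (b - a)) := by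
    rw [← hsqrt]; exact hL.trans hH
  calc (∫ x in Set.Icc a b, σ x) ^ 2 = |∫ x, σ x ∂ν| ^ 2 := by rw [sq_abs]
    _ ≤ Real.sqrt ((∫ x, σ x ^ 2 ∂ν) * (b - a)) ^ 2 :=
        pow_le_pow_left₀ (abs_nonneg _) habs 2
    _ = (∫ x, σ x ^ 2 ∂ν) * (b - a) := Real.sq_sqrt (mul_nonneg hA0 hba)
    _ = (b - a) * ∫ x in Set.Icc a b, σ x ^ 2 := mul_comm _ _

lemma kh_pieces (N : ℕ) (hN : 0 < N) (f : ℝ → ℝ)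
    (hf : IntegrableOn f (Set.Icc (0:ℝ) 1) volume) :
    ∑ i : Fin N, ∫ x in Set.Icc ((i.val:ℝ)/N) (((i.val:ℝ)+1)/N), f x
      = ∫ x in Set.Icc (0:ℝ) 1, f x := by
  have hNpos : (0:ℝ) < N := Nat.cast_pos.2 hN
  set a : ℕ → ℝ := fun k => k / N with ha
  have hmono : ∀ k, a k ≤ a (k+1) := fun k => by
    simp only [ha, Nat.cast_succ]
    gcongr
    linarith
  have hsub : ∀ k < N, Set.Icc (a k) (a (k+1)) ⊆ Set.Icc (0:ℝ) 1 := by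
    intro k hk
    apply Set.Icc_subset_Icc
    · simp only [ha]; positivity
    · simp only [ha, Nat.cast_succ]
      rw [div_le_one hNpos]
      exact_mod_cast Nat.succ_le_of_lt hk
  have hint : ∀ k < N, IntervalIntegrable f volume (a k) (a (k+1)) := by
    intro k hk
    rw [intervalIntegrable_iff_integrableOn_Icc_of_le (hmono k)]
    exact hf.mono_set (hsub k hk)
  have hadj := intervalIntegral.sum_integral_adjacent_intervals hint
  have ha0 : a 0 = 0 := by simp [ha]
  have haN : a N = 1 := by simp [ha]; exact hN.ne'
  have hIcc : ∀ k, (∫ x in (a k)..(a (k+1)), f x)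
      = ∫ x in Set.Icc (a k) (a (k+1)), f x := by
    intro k
    rw [intervalIntegral.integral_of_le (hmono k), MeasureTheory.integral_Icc_eq_integral_Ioc]
  rw [Fin.sum_univ_eq_sum_range
    (fun k => ∫ x in Set.Icc ((k:ℝ)/N) (((k:ℝ)+1)/N), f x)]
  calc ∑ k ∈ Finset.range N, ∫ x in Set.Icc ((k:ℝ)/N) (((k:ℝ)+1)/N), f x
      = ∑ k ∈ Finset.range N, ∫ x in (a k)..(a (k+1)), f x := by
        refine Finset.sum_congr rfl fun k _ => ?_
        rw [hIcc k]
        congr 1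
        simp [ha, Nat.cast_succ, add_div]
    _ = ∫ x in (a 0)..(a N), f x := hadj
    _ = ∫ x in Set.Icc (0:ℝ) 1, f x := by
        rw [ha0, haN, intervalIntegral.integral_of_le zero_le_one,
          MeasureTheory.integral_Icc_eq_integral_Ioc]

lemma kh_double_sum {N : ℕ} (a : Fin N → Fin N → ℝ) (hsym : ∀ i j, a i j = a j i)
    (P : Fin N → ℝ) :
    ∑ i, ∑ j, a i j * (P j - P i) * P i
      = -(1/2) * ∑ i, ∑ j, a i j * (P i - P j) ^ 2 := by
  have h1 : ∑ i, ∑ j, a i j * (P j - P i) * P i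
      = ∑ i, ∑ j, a i j * (P i - P j) * P j := by
    rw [Finset.sum_comm]
    exact Finset.sum_congr rfl fun i _ => Finset.sum_congr rfl fun j _ => by rw [hsym]
  have key : (∑ i, ∑ j, a i j * (P j - P i) * P i)
      + (∑ i, ∑ j, a i j * (P i - P j) * P j)
      = -(∑ i, ∑ j, a i j * (P i - P j) ^ 2) := by
    rw [← Finset.sum_neg_distrib, ← Finset.sum_add_distrib]
    refine Finset.sum_congr rfl fun i _ => ?_
    rw [← Finset.sum_neg_distrib, ← Finset.sum_add_distrib]
    exact Finset.sum_congr rfl fun j _ => by ring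
  linarith [key, h1]

lemma kh_sum_sq {N : ℕ} (P : Fin N → ℝ) (hPsum : ∑ i, P i = 0) :
    ∑ i, ∑ j, (P i - P j) ^ 2 = 2 * N * ∑ i, (P i) ^ 2 := by
  have inner : ∀ i : Fin N, ∑ j, (P i - P j) ^ 2
      = N * P i ^ 2 + (∑ j, P j ^ 2) := by
    intro i
    calc ∑ j, (P i - P j) ^ 2
        = ∑ j, (P i ^ 2 + P j ^ 2 - (2 * P i) * P j) :=
          Finset.sum_congr rfl fun j _ => by ring
      _ = (∑ _j : Fin N, P i ^ 2) + (∑ j, P j ^ 2) - (2 * P i) * ∑ j, P j := by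
          rw [Finset.sum_sub_distrib, Finset.sum_add_distrib, ← Finset.mul_sum]
      _ = N * P i ^ 2 + (∑ j, P j ^ 2) := by
          rw [hPsum, Finset.sum_const, Finset.card_univ, Fintype.card_fin, nsmul_eq_mul]
          ring
  rw [Finset.sum_congr rfl fun i _ => inner i, Finset.sum_add_distrib,
    Finset.sum_const, Finset.card_univ, Fintype.card_fin, nsmul_eq_mul, ← Finset.mul_sum]
  ring

/-- Estimate on solutions of the Kirchhoff law: under the uniform connectivity assumption,
with `B ≥ r` on edges and `0` off edges, and sources `Sᵢ = ∫_{Iᵢᴺ} σ`, any zero-sum solution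
`P` of the Kirchhoff law satisfies `∑ᵢⱼ (Pᵢ − Pⱼ)² ≤ (8N²/(rλ)²) ∫ σ²`. -/
theorem kirchhoff_estimate (N : ℕ) (hN : 0 < N) (lam r : ℝ) (hlam : 0 < lam) (hr : 0 < r)
    (σ : ℝ → ℝ) (hσ : MemLp σ 2 μI) (hσ0 : ∫ x, σ x ∂μI = 0)
    (W B : Fin N → Fin N → ℝ)
    (hW01 : ∀ i j, W i j = 0 ∨ W i j = 1)
    (hWsym : ∀ i j, W i j = W j i)
    (hconn : ∀ z : Fin N → ℝ, (∑ i, z i) = 0 →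
      lam * N * ∑ i, (z i) ^ 2 ≤ ∑ i, ∑ j, (z i - z j) ^ 2 * W i j)
    (hBsym : ∀ i j, B i j = B j i)
    (hBr : ∀ i j, W i j = 1 → r ≤ B i j)
    (hB0 : ∀ i j, W i j = 0 → B i j = 0)
    (P : Fin N → ℝ) (hPsum : ∑ i, P i = 0)
    (hK : ∀ i : Fin N, -(1 / (N : ℝ) ^ 2) * ∑ j, W i j * B i j * (P j - P i)
      = ∫ x in Set.Icc ((i.val : ℝ) / N) (((i.val : ℝ) + 1) / N), σ x) :
    ∑ i, ∑ j, (P i - P j) ^ 2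
      ≤ (8 * (N : ℝ) ^ 2 / (r * lam) ^ 2) * ∫ x, (σ x) ^ 2 ∂μI := by
  have hNpos : (0:ℝ) < N := Nat.cast_pos.2 hN
  set S : Fin N → ℝ := fun i => ∫ x in Set.Icc ((i.val : ℝ) / N) (((i.val : ℝ) + 1) / N), σ x
    with hS
  set E : ℝ := ∑ i, ∑ j, W i j * B i j * (P i - P j) ^ 2 with hE
  set Q : ℝ := ∑ i, (P i) ^ 2 with hQ
  set J : ℝ := ∫ x, (σ x) ^ 2 ∂μI with hJ
  have hJ0 : 0 ≤ J := integral_nonneg fun x => sq_nonneg _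
  have hQ0 : 0 ≤ Q := Finset.sum_nonneg fun i _ => sq_nonneg _
  -- Step 1: ∑ Sᵢ Pᵢ = E / (2N²)
  have step1 : ∑ i, S i * P i = (1/(2*(N:ℝ)^2)) * E := by
    calc ∑ i, S i * P i
        = ∑ i, (-(1 / (N : ℝ) ^ 2) * ∑ j, W i j * B i j * (P j - P i)) * P i := by
          refine Finset.sum_congr rfl fun i _ => ?_
          rw [hS]; rw [hK i]
      _ = -(1/(N:ℝ)^2) * ∑ i, ∑ j, W i j * B i j * (P j - P i) * P i := by
          rw [Finset.mul_sum]
          refine Finset.sum_congr rfl fun i _ => ?_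
          rw [mul_assoc]
          congr 1
          rw [Finset.sum_mul]
      _ = -(1/(N:ℝ)^2) * (-(1/2) * E) := by
          rw [kh_double_sum (fun i j => W i j * B i j)
            (fun i j => by rw [hWsym, hBsym]) P]
      _ = (1/(2*(N:ℝ)^2)) * E := by ring
  -- E ≥ 0
  have hE0 : 0 ≤ E := by
    refine Finset.sum_nonneg fun i _ => Finset.sum_nonneg fun j _ => ?_
    rcases hW01 i j with h | h
    · simp [h]
    · have := hBr i j h
      have : 0 ≤ B i j := le_trans hr.le this
      positivity
  -- Step 2: r·lam·N·Q ≤ E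
  have step2 : r * (lam * N * Q) ≤ E := by
    have h1 := hconn P hPsum
    have h2 : r * ∑ i, ∑ j, (P i - P j) ^ 2 * W i j ≤ E := by
      rw [Finset.mul_sum]
      refine Finset.sum_le_sum fun i _ => ?_
      rw [Finset.mul_sum]
      refine Finset.sum_le_sum fun j _ => ?_
      rcases hW01 i j with h | h
      · simp [h, hB0 i j h]
      · rw [h]
        have hb := hBr i j h
        nlinarith [sq_nonneg (P i - P j)]
    calc r * (lam * N * Q) ≤ r * ∑ i, ∑ j, (P i - P j) ^ 2 * W i j := by
          exact mul_le_mul_of_nonneg_left h1 hr.le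
      _ ≤ E := h2
  -- Step 3: (∑ S P)² ≤ (J/N)·Q
  have hScs : ∀ i : Fin N, (S i) ^ 2
      ≤ (1/(N:ℝ)) * ∫ x in Set.Icc ((i.val : ℝ) / N) (((i.val : ℝ) + 1) / N), σ x ^ 2 := by
    intro i
    have hab : ((i.val : ℝ)) / N ≤ ((i.val : ℝ) + 1) / N := by
      gcongr
      linarith
    have hsub : Set.Icc ((i.val : ℝ) / N) (((i.val : ℝ) + 1) / N) ⊆ Set.Icc (0:ℝ) 1 := by
      apply Set.Icc_subset_Icc
      · positivity
      · rw [div_le_one hNpos]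
        exact_mod_cast i.isLt
    have := kh_cs σ hσ hab hsub
    have hd : ((i.val : ℝ) + 1) / N - (i.val : ℝ) / N = 1/(N:ℝ) := by ring
    rwa [hd] at this
  have hint2 : IntegrableOn (fun x => σ x ^ 2) (Set.Icc (0:ℝ) 1) volume := by
    have := hσ.integrable_sq
    rwa [μI] at this
  have hJset : J = ∫ x in Set.Icc (0:ℝ) 1, σ x ^ 2 := by rw [hJ, μI]
  have hSsum : ∑ i, (S i) ^ 2 ≤ J / N := by
    calc ∑ i, (S i) ^ 2
        ≤ ∑ i : Fin N, (1/(N:ℝ)) *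
            ∫ x in Set.Icc ((i.val : ℝ) / N) (((i.val : ℝ) + 1) / N), σ x ^ 2 :=
          Finset.sum_le_sum fun i _ => hScs i
      _ = (1/(N:ℝ)) * ∑ i : Fin N,
            ∫ x in Set.Icc ((i.val : ℝ) / N) (((i.val : ℝ) + 1) / N), σ x ^ 2 := by
          rw [Finset.mul_sum]
      _ = (1/(N:ℝ)) * ∫ x in Set.Icc (0:ℝ) 1, σ x ^ 2 := by
          rw [kh_pieces N hN _ hint2]
      _ = J / N := by rw [hJset]; ring
  have hcs := Finset.sum_mul_sq_le_sq_mul_sq Finset.univ S P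
  have step3 : (∑ i, S i * P i) ^ 2 ≤ (J / N) * Q := by
    calc (∑ i, S i * P i) ^ 2 ≤ (∑ i, (S i)^2) * ∑ i, (P i)^2 := hcs
      _ ≤ (J / N) * Q := mul_le_mul_of_nonneg_right hSsum hQ0
  -- Combine
  have hSP0 : 0 ≤ ∑ i, S i * P i := by
    rw [step1]; positivity
  have hmain : r * lam * N * Q ≤ 2 * (N:ℝ)^2 * ∑ i, S i * P i := by
    have : E = 2 * (N:ℝ)^2 * ∑ i, S i * P i := by
      rw [step1]; field_simp
    calc r * lam * N * Q = r * (lam * N * Q) := by ring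
      _ ≤ E := step2
      _ = _ := this
  have hsq : (r * lam * N * Q) ^ 2 ≤ 4 * (N:ℝ)^3 * J * Q := by
    have h1 : (r * lam * N * Q) ^ 2 ≤ (2 * (N:ℝ)^2 * ∑ i, S i * P i) ^ 2 :=
      pow_le_pow_left₀ (by positivity) hmain 2
    calc (r * lam * N * Q) ^ 2 ≤ (2 * (N:ℝ)^2 * ∑ i, S i * P i) ^ 2 := h1
      _ = 4 * (N:ℝ)^4 * (∑ i, S i * P i) ^ 2 := by ring
      _ ≤ 4 * (N:ℝ)^4 * ((J / N) * Q) := by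
          exact mul_le_mul_of_nonneg_left step3 (by positivity)
      _ = 4 * (N:ℝ)^3 * J * Q := by field_simp
  rcases eq_or_lt_of_le hQ0 with hQz | hQpos
  · rw [kh_sum_sq P hPsum, ← hQ, ← hQz]
    simp only [mul_zero]
    have : 0 ≤ (8 * (N:ℝ)^2 / (r*lam)^2) := by positivity
    exact mul_nonneg this hJ0
  · have hQ' : (r*lam)^2 * Q ≤ 4 * N * J := by
      have hpos : (0:ℝ) < (N:ℝ)^2 * Q := by positivity
      have : ((r*lam)^2 * Q) * ((N:ℝ)^2 * Q) ≤ (4 * N * J) * ((N:ℝ)^2 * Q) := by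
        calc ((r*lam)^2 * Q) * ((N:ℝ)^2 * Q) = (r * lam * N * Q) ^ 2 := by ring
          _ ≤ 4 * (N:ℝ)^3 * J * Q := hsq
          _ = (4 * N * J) * ((N:ℝ)^2 * Q) := by ring
      exact le_of_mul_le_mul_right this hpos
    have hrl : (0:ℝ) < (r*lam)^2 := by positivity
    rw [kh_sum_sq P hPsum, ← hQ,
      show (8 * (N:ℝ)^2 / (r*lam)^2) * J = (8 * (N:ℝ)^2 * J) / (r*lam)^2 by ring,
      le_div_iff₀ hrl]
    calc 2 * (N:ℝ) * Q * (r*lam)^2 = 2 * N * ((r*lam)^2 * Q) := by ring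
      _ ≤ 2 * N * (4 * N * J) := mul_le_mul_of_nonneg_left hQ' (by positivity)
      _ = 8 * (N:ℝ)^2 * J := by ring
end

section
/- If for each N the pixel picture w^N of the adjacency matrix W^N satisfies the discrete Poincaré inequality ∬ (Z^N[z](x) − Z^N[z](y))^2 w^N(x,y) dx dy ≥ λ ∫ Z^N[z](x)^2 dx for all z ∈ L^2_0([0,1]) (which follows from the graph connectivity assumption), and w^N → w in L^1([0,1]^2) with w ∈ L^∞, then the limit graphon satisfies ∬ (z(x) − z(y))^2 w(x,y) dx dy ≥ λ ∫_0^1 z(x)^2 dx for all z ∈ L^2_0([0,1]). -/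
open MeasureTheory Set Filter

noncomputable def μsq : Measure (ℝ × ℝ) := μI.prod μI

/-- The grid cell `I_i^N` containing `x`, with clamped index. -/
def gridCell (N : ℕ) (x : ℝ) : Set ℝ :=
  Set.Icc (((min ⌊x * (N : ℝ)⌋.toNat (N - 1) : ℕ) : ℝ) / N)
    ((((min ⌊x * (N : ℝ)⌋.toNat (N - 1) : ℕ) : ℝ) + 1) / N)

/-- The projection `Z^N` onto piecewise constant functions on the intervals `I_i^N`. -/
noncomputable def ZN1 (N : ℕ) (u : ℝ → ℝ) (x : ℝ) : ℝ :=
  (N : ℝ) * ∫ s in gridCell N x, u s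

lemma muI_prob : IsProbabilityMeasure μI := by constructor; simp [μI, Real.volume_Icc]

lemma mp_fst : MeasurePreserving Prod.fst μsq μI := by
  haveI := muI_prob
  exact ⟨measurable_fst, by simp [μsq]⟩

lemma mp_snd : MeasurePreserving Prod.snd μsq μI := by
  haveI := muI_prob
  exact ⟨measurable_snd, by simp [μsq]⟩

lemma memLp_fst {g : ℝ → ℝ} (hg : MemLp g 2 μI) : MemLp (fun q : ℝ × ℝ => g q.1) 2 μsq :=
  hg.comp_measurePreserving mp_fst

lemma memLp_snd {g : ℝ → ℝ} (hg : MemLp g 2 μI) : MemLp (fun q : ℝ × ℝ => g q.2) 2 μsq :=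
  hg.comp_measurePreserving mp_snd

lemma integral_fst' {g : ℝ → ℝ} (hg : AEStronglyMeasurable g μI) :
    ∫ q, g q.1 ∂μsq = ∫ x, g x ∂μI := by
  have h := integral_map (μ := μsq) mp_fst.aemeasurable (f := g)
    (by rw [mp_fst.map_eq]; exact hg)
  rw [mp_fst.map_eq] at h
  exact h.symm

lemma integral_snd' {g : ℝ → ℝ} (hg : AEStronglyMeasurable g μI) :
    ∫ q, g q.2 ∂μsq = ∫ x, g x ∂μI := by
  have h := integral_map (μ := μsq) mp_snd.aemeasurable (f := g)
    (by rw [mp_snd.map_eq]; exact hg)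
  rw [mp_snd.map_eq] at h
  exact h.symm

lemma integral_diff_sq_le {g : ℝ → ℝ} (hg : MemLp g 2 μI) :
    ∫ q, (g q.1 - g q.2) ^ 2 ∂μsq ≤ 4 * ∫ x, g x ^ 2 ∂μI := by
  have h1 : Integrable (fun q : ℝ × ℝ => g q.1 ^ 2) μsq := (memLp_fst hg).integrable_sq
  have h2 : Integrable (fun q : ℝ × ℝ => g q.2 ^ 2) μsq := (memLp_snd hg).integrable_sq
  have hd : Integrable (fun q : ℝ × ℝ => (g q.1 - g q.2) ^ 2) μsq :=
    ((memLp_fst hg).sub (memLp_snd hg)).integrable_sq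
  have hle : ∫ q, (g q.1 - g q.2) ^ 2 ∂μsq ≤ ∫ q, (2 * g q.1 ^ 2 + 2 * g q.2 ^ 2) ∂μsq := by
    refine integral_mono hd ((h1.const_mul 2).add (h2.const_mul 2)) fun q => ?_
    nlinarith [sq_nonneg (g q.1 + g q.2)]
  rw [integral_add (h1.const_mul 2) (h2.const_mul 2), integral_const_mul, integral_const_mul,
    integral_fst' (g := fun x => g x ^ 2) (hg.integrable_sq.aestronglyMeasurable),
    integral_snd' (g := fun x => g x ^ 2) (hg.integrable_sq.aestronglyMeasurable)] at hle
  linarith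

lemma ZN1_eq (N : ℕ) (z : ℝ → ℝ) :
    ZN1 N z = (fun j : ℕ => (N : ℝ) * ∫ s in Set.Icc ((j : ℝ) / N) (((j : ℝ) + 1) / N), z s) ∘
      (fun x : ℝ => min ⌊x * (N : ℝ)⌋.toNat (N - 1)) := rfl

lemma ZN1_measurable (N : ℕ) (z : ℝ → ℝ) : Measurable (ZN1 N z) := by
  rw [ZN1_eq]
  have h1 : Measurable fun x : ℝ => x * (N : ℝ) := measurable_id.mul_const _
  have h2 : Measurable fun x : ℝ => (min ⌊x * (N : ℝ)⌋.toNat (N - 1) : ℕ) :=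
    (measurable_from_top (f := fun n : ℤ => min n.toNat (N - 1))).comp
      (Int.measurable_floor.comp h1)
  exact (measurable_from_top).comp h2

lemma ZN1_bound (N : ℕ) (z : ℝ → ℝ) : ∃ C : ℝ, ∀ x, |ZN1 N z x| ≤ C := by
  refine ⟨(Finset.range (N + 1)).sup' Finset.nonempty_range_add_one
    (fun j => |(N : ℝ) * ∫ s in Set.Icc ((j : ℝ) / N) (((j : ℝ) + 1) / N), z s|), fun x => ?_⟩
  have hmem : min ⌊x * (N : ℝ)⌋.toNat (N - 1) ∈ Finset.range (N + 1) :=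
    Finset.mem_range_succ_iff.mpr (le_trans (min_le_right _ _) (Nat.sub_le N 1))
  have h := Finset.le_sup'
    (fun j : ℕ => |(N : ℝ) * ∫ s in Set.Icc ((j : ℝ) / N) (((j : ℝ) + 1) / N), z s|) hmem
  exact h

lemma ZN1_memLp (N : ℕ) (z : ℝ → ℝ) : MemLp (ZN1 N z) 2 μI := by
  haveI := muI_prob
  obtain ⟨C, hC⟩ := ZN1_bound N z
  exact MemLp.of_bound (ZN1_measurable N z).aestronglyMeasurable C
    (ae_of_all _ fun x => by rw [Real.norm_eq_abs]; exact hC x)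

lemma sq_diff_bound {δ : ℝ} (hδ : 0 < δ) (A B : ℝ) :
    |A ^ 2 - B ^ 2| ≤ (1 / (2 * δ) + δ) * (A - B) ^ 2 + 4 * δ * B ^ 2 := by
  have k1 : 0 ≤ (1 / (2 * δ)) * ((A - B) - δ * (A + B)) ^ 2 := by positivity
  have k2 : 0 ≤ (1 / (2 * δ)) * ((A - B) + δ * (A + B)) ^ 2 := by positivity
  have e1 : (1 / (2 * δ)) * ((A - B) - δ * (A + B)) ^ 2
      = (1 / (2 * δ)) * (A - B) ^ 2 - (A ^ 2 - B ^ 2) + δ * (A + B) ^ 2 / 2 := by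
    field_simp; ring
  have e2 : (1 / (2 * δ)) * ((A - B) + δ * (A + B)) ^ 2
      = (1 / (2 * δ)) * (A - B) ^ 2 + (A ^ 2 - B ^ 2) + δ * (A + B) ^ 2 / 2 := by
    field_simp; ring
  have k3 : 0 ≤ δ * (A - 3 * B) ^ 2 := by positivity
  rw [abs_le]
  constructor <;> nlinarith [k1, k2, e1, e2, k3]

set_option maxHeartbeats 1600000 in
/-- Passage to the limit in the discrete Poincaré inequality: if the pixel pictures `wⁿ`
(0-1 valued) satisfy the discrete spectral gap inequality for projected functions, and
`wⁿ → w` in `L¹([0,1]²)` with `w` bounded, then the limit graphon `w` satisfies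
`∬ (z(x) − z(y))² w ≥ λ ∫ z²` for all zero-mean `z ∈ L²`. -/
theorem graphon_spectral_gap_limit (lam : ℝ) (hlam : 0 < lam)
    (wseq : ℕ → ℝ × ℝ → ℝ) (w : ℝ × ℝ → ℝ)
    (hwseqm : ∀ N, Measurable (wseq N)) (hwm : Measurable w)
    (hw01 : ∀ N z, wseq N z = 0 ∨ wseq N z = 1)
    (hdisc : ∀ N : ℕ, ∀ z : ℝ → ℝ, MemLp z 2 μI → (∫ x, z x ∂μI) = 0 →
      lam * ∫ x, (ZN1 N z x) ^ 2 ∂μI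
        ≤ ∫ q, (ZN1 N z q.1 - ZN1 N z q.2) ^ 2 * wseq N q ∂μsq)
    (hL1conv : Tendsto (fun N => ∫ q, |wseq N q - w q| ∂μsq) atTop (nhds 0))
    (hwbd : ∃ M, ∀ q, |w q| ≤ M)
    (hZconv : ∀ z : ℝ → ℝ, MemLp z 2 μI →
      Tendsto (fun N => ∫ x, (ZN1 N z x - z x) ^ 2 ∂μI) atTop (nhds 0)) :
    ∀ z : ℝ → ℝ, MemLp z 2 μI → (∫ x, z x ∂μI) = 0 →
      lam * ∫ x, (z x) ^ 2 ∂μI ≤ ∫ q, (z q.1 - z q.2) ^ 2 * w q ∂μsq := by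
  obtain ⟨M, hM⟩ := hwbd
  have hM0 : 0 ≤ M := le_trans (abs_nonneg _) (hM (0, 0))
  intro z hz hz0
  haveI := muI_prob
  haveI : IsProbabilityMeasure μsq := by
    have : IsProbabilityMeasure (μI.prod μI) := by infer_instance
    exact this
  -- basic facts about z
  have hz2 : Integrable (fun x => z x ^ 2) μI := hz.integrable_sq
  have hS0 : 0 ≤ ∫ x, z x ^ 2 ∂μI := integral_nonneg fun x => sq_nonneg _
  have hf_int : Integrable (fun q : ℝ × ℝ => (z q.1 - z q.2) ^ 2) μsq :=
    ((memLp_fst hz).sub (memLp_snd hz)).integrable_sq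
  have hF0 : 0 ≤ ∫ q, (z q.1 - z q.2) ^ 2 ∂μsq := integral_nonneg fun q => sq_nonneg _
  have hw_int : Integrable w μsq :=
    Integrable.mono' (integrable_const M) hwm.aestronglyMeasurable
      (ae_of_all _ fun q => by rw [Real.norm_eq_abs]; exact hM q)
  have hfw_int : Integrable (fun q : ℝ × ℝ => (z q.1 - z q.2) ^ 2 * w q) μsq := by
    have h := Integrable.bdd_mul (f := w) (c := M) hf_int hwm.aestronglyMeasurable
      (ae_of_all _ fun q => by rw [Real.norm_eq_abs]; exact hM q)
    simpa [mul_comm] using h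
  -- truncation facts
  have hmin_int : ∀ K : ℕ,
      Integrable (fun q : ℝ × ℝ => min ((z q.1 - z q.2) ^ 2) (K : ℝ)) μsq := by
    intro K
    refine Integrable.mono' hf_int ?_ (ae_of_all _ fun q => ?_)
    · exact aestronglyMeasurable_iff_aemeasurable.mpr
        (hf_int.aemeasurable.min aemeasurable_const)
    · rw [Real.norm_eq_abs, abs_of_nonneg (le_min (sq_nonneg _) (Nat.cast_nonneg K))]
      exact min_le_left _ _
  have hT : Tendsto
      (fun K : ℕ => ∫ q, ((z q.1 - z q.2) ^ 2 - min ((z q.1 - z q.2) ^ 2) (K : ℝ)) ∂μsq)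
      atTop (nhds 0) := by
    have h := tendsto_integral_of_dominated_convergence
      (F := fun K : ℕ => fun q : ℝ × ℝ => (z q.1 - z q.2) ^ 2 - min ((z q.1 - z q.2) ^ 2) (K : ℝ))
      (f := fun _ : ℝ × ℝ => (0 : ℝ))
      (fun q : ℝ × ℝ => (z q.1 - z q.2) ^ 2)
      (fun K => (hf_int.sub (hmin_int K)).aestronglyMeasurable)
      hf_int
      (fun K => ae_of_all _ fun q => by
        show ‖(z q.1 - z q.2) ^ 2 - min ((z q.1 - z q.2) ^ 2) (K : ℝ)‖ ≤ (z q.1 - z q.2) ^ 2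
        rw [Real.norm_eq_abs,
          abs_of_nonneg (sub_nonneg.mpr (min_le_left _ _))]
        have : 0 ≤ min ((z q.1 - z q.2) ^ 2) (K : ℝ) :=
          le_min (sq_nonneg _) (Nat.cast_nonneg K)
        linarith)
      (ae_of_all _ fun q => by
        refine tendsto_const_nhds.congr' ?_
        filter_upwards [eventually_ge_atTop ⌈(z q.1 - z q.2) ^ 2⌉₊] with K hK
        rw [min_eq_left (by exact_mod_cast Nat.ceil_le.mp hK), sub_self])
    simpa using h
  -- per-N facts
  have hwb1 : ∀ N q, |wseq N q| ≤ 1 := by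
    intro N q; rcases hw01 N q with h | h <;> simp [h]
  have hwN_int : ∀ N, Integrable (wseq N) μsq := fun N =>
    Integrable.mono' (integrable_const 1) (hwseqm N).aestronglyMeasurable
      (ae_of_all _ fun q => by rw [Real.norm_eq_abs]; exact hwb1 N q)
  have hmemN : ∀ N, MemLp (ZN1 N z) 2 μI := fun N => ZN1_memLp N z
  have hzN2 : ∀ N, Integrable (fun x => (ZN1 N z x) ^ 2) μI := fun N => (hmemN N).integrable_sq
  have hgmem : ∀ N, MemLp (fun x => ZN1 N z x - z x) 2 μI := fun N => (hmemN N).sub hz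
  have hgN2 : ∀ N, Integrable (fun x => (ZN1 N z x - z x) ^ 2) μI := fun N =>
    (hgmem N).integrable_sq
  have he0 : ∀ N, 0 ≤ ∫ x, (ZN1 N z x - z x) ^ 2 ∂μI := fun N =>
    integral_nonneg fun x => sq_nonneg _
  have hfN_int : ∀ N, Integrable (fun q : ℝ × ℝ => (ZN1 N z q.1 - ZN1 N z q.2) ^ 2) μsq :=
    fun N => ((memLp_fst (hmemN N)).sub (memLp_snd (hmemN N))).integrable_sq
  have hfNwN_int : ∀ N,
      Integrable (fun q : ℝ × ℝ => (ZN1 N z q.1 - ZN1 N z q.2) ^ 2 * wseq N q) μsq := by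
    intro N
    obtain ⟨C, hC⟩ := ZN1_bound N z
    have hC0 : 0 ≤ C := le_trans (abs_nonneg _) (hC 0)
    refine Integrable.bdd_mul (c := (2 * C) ^ 2) (hwN_int N) (hfN_int N).aestronglyMeasurable (ae_of_all _ fun q => ?_)
    rw [Real.norm_eq_abs, abs_of_nonneg (sq_nonneg _)]
    have h1 := abs_le.mp (hC q.1)
    have h2 := abs_le.mp (hC q.2)
    nlinarith [h1.1, h1.2, h2.1, h2.2]
  have hDint : ∀ N, Integrable
      (fun q : ℝ × ℝ => ((ZN1 N z q.1 - ZN1 N z q.2) - (z q.1 - z q.2)) ^ 2) μsq := by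
    intro N
    have h := ((memLp_fst (hgmem N)).sub (memLp_snd (hgmem N))).integrable_sq
    refine h.congr (ae_of_all _ fun q => by simp only [Pi.sub_apply]; ring)
  have hDle : ∀ N, ∫ q, ((ZN1 N z q.1 - ZN1 N z q.2) - (z q.1 - z q.2)) ^ 2 ∂μsq
      ≤ 4 * ∫ x, (ZN1 N z x - z x) ^ 2 ∂μI := by
    intro N
    have h := integral_diff_sq_le (hgmem N)
    have heq : ∫ q, ((ZN1 N z q.1 - ZN1 N z q.2) - (z q.1 - z q.2)) ^ 2 ∂μsq
        = ∫ q : ℝ × ℝ, ((ZN1 N z q.1 - z q.1) - (ZN1 N z q.2 - z q.2)) ^ 2 ∂μsq :=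
      integral_congr_ae (ae_of_all _ fun q => by ring)
    rw [heq]
    exact h
  have hwdiff_int : ∀ N, Integrable (fun q => |wseq N q - w q|) μsq := fun N =>
    ((hwN_int N).sub hw_int).abs
  have hQ_int : ∀ N, Integrable (fun q : ℝ × ℝ => |wseq N q - w q| * (z q.1 - z q.2) ^ 2) μsq := by
    intro N
    refine Integrable.bdd_mul (c := 1 + M) hf_int ((hwdiff_int N)).aestronglyMeasurable (ae_of_all _ fun q => ?_)
    rw [Real.norm_eq_abs, abs_abs]
    calc |wseq N q - w q| ≤ |wseq N q| + |w q| := abs_sub _ _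
      _ ≤ 1 + M := add_le_add (hwb1 N q) (hM q)
  have hη0 : ∀ N, 0 ≤ ∫ q, |wseq N q - w q| ∂μsq := fun N =>
    integral_nonneg fun q => abs_nonneg _
  -- conclude by epsilon argument
  by_contra hcon
  push_neg at hcon
  set ε := (lam * (∫ x, z x ^ 2 ∂μI) - ∫ q, (z q.1 - z q.2) ^ 2 * w q ∂μsq) / 2 with hεdef
  have hε : 0 < ε := by simp only [hεdef]; linarith
  suffices hsuff : lam * ∫ x, z x ^ 2 ∂μI ≤ (∫ q, (z q.1 - z q.2) ^ 2 * w q ∂μsq) + ε by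
    simp only [hεdef] at hsuff; linarith
  -- choose δ
  have hD : (0 : ℝ) < (∫ q, (z q.1 - z q.2) ^ 2 ∂μsq) + lam * (∫ x, z x ^ 2 ∂μI) + 1 := by
    nlinarith
  set δ := ε / (16 * ((∫ q, (z q.1 - z q.2) ^ 2 ∂μsq) + lam * (∫ x, z x ^ 2 ∂μI) + 1)) with hδdef
  have hδ : 0 < δ := div_pos hε (by linarith)
  have hδD : δ * ((∫ q, (z q.1 - z q.2) ^ 2 ∂μsq) + lam * (∫ x, z x ^ 2 ∂μI) + 1) = ε / 16 := by
    rw [hδdef]; field_simp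
  have hδ4 : 4 * δ * ((∫ q, (z q.1 - z q.2) ^ 2 ∂μsq) + lam * (∫ x, z x ^ 2 ∂μI)) ≤ ε / 4 := by
    nlinarith [hδ.le]
  -- choose K
  have hT' : Tendsto (fun K : ℕ => (1 + M) *
      ∫ q, ((z q.1 - z q.2) ^ 2 - min ((z q.1 - z q.2) ^ 2) (K : ℝ)) ∂μsq) atTop (nhds 0) := by
    simpa using hT.const_mul (1 + M)
  obtain ⟨K, hK⟩ := (hT'.eventually_lt_const (show (0:ℝ) < ε / 4 by linarith)).exists
  -- choose N
  have heN : Tendsto (fun N => (lam + 4) * ((1 / (2 * δ) + δ) *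
      ∫ x, (ZN1 N z x - z x) ^ 2 ∂μI)) atTop (nhds 0) := by
    have h := ((hZconv z hz).const_mul (1 / (2 * δ) + δ)).const_mul (lam + 4)
    simpa using h
  have hηN : Tendsto (fun N => (K : ℝ) * ∫ q, |wseq N q - w q| ∂μsq) atTop (nhds 0) := by
    simpa using hL1conv.const_mul (K : ℝ)
  obtain ⟨N, hNa, hNb⟩ :=
    ((heN.eventually_lt_const (show (0:ℝ) < ε / 4 by linarith)).and
      (hηN.eventually_lt_const (show (0:ℝ) < ε / 4 by linarith))).exists
  -- Step 1: projected L² norms are close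
  have h1 : (∫ x, z x ^ 2 ∂μI) ≤ (∫ x, (ZN1 N z x) ^ 2 ∂μI)
      + ((1 / (2 * δ) + δ) * (∫ x, (ZN1 N z x - z x) ^ 2 ∂μI)
        + 4 * δ * ∫ x, z x ^ 2 ∂μI) := by
    have hpt : ∀ x, z x ^ 2 - (ZN1 N z x) ^ 2
        ≤ (1 / (2 * δ) + δ) * (ZN1 N z x - z x) ^ 2 + 4 * δ * z x ^ 2 := by
      intro x
      have h := sq_diff_bound hδ (ZN1 N z x) (z x)
      have h2 := neg_abs_le ((ZN1 N z x) ^ 2 - z x ^ 2)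
      linarith [abs_le.mp h]
    have hmono := integral_mono (hz2.sub (hzN2 N))
      (((hgN2 N).const_mul _).add (hz2.const_mul _)) hpt
    simp only [Pi.sub_apply, Pi.add_apply] at hmono
    rw [integral_sub hz2 (hzN2 N), integral_add ((hgN2 N).const_mul _) (hz2.const_mul _),
      integral_const_mul, integral_const_mul] at hmono
    linarith
  -- Step 2: discrete inequality
  have h2 := hdisc N z hz hz0
  -- Step 3: split the double integral
  have h3 : (∫ q, (ZN1 N z q.1 - ZN1 N z q.2) ^ 2 * wseq N q ∂μsq)
      ≤ (∫ q, (z q.1 - z q.2) ^ 2 * w q ∂μsq)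
        + (∫ q, |(ZN1 N z q.1 - ZN1 N z q.2) ^ 2 - (z q.1 - z q.2) ^ 2| ∂μsq)
        + ∫ q, |wseq N q - w q| * (z q.1 - z q.2) ^ 2 ∂μsq := by
    have habs_int : Integrable
        (fun q : ℝ × ℝ => |(ZN1 N z q.1 - ZN1 N z q.2) ^ 2 - (z q.1 - z q.2) ^ 2|) μsq :=
      ((hfN_int N).sub hf_int).abs
    have hpt : ∀ q : ℝ × ℝ, (ZN1 N z q.1 - ZN1 N z q.2) ^ 2 * wseq N q
        - (z q.1 - z q.2) ^ 2 * w q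
        ≤ |(ZN1 N z q.1 - ZN1 N z q.2) ^ 2 - (z q.1 - z q.2) ^ 2|
          + |wseq N q - w q| * (z q.1 - z q.2) ^ 2 := by
      intro q
      have a1 : ((ZN1 N z q.1 - ZN1 N z q.2) ^ 2 - (z q.1 - z q.2) ^ 2) * wseq N q
          ≤ |(ZN1 N z q.1 - ZN1 N z q.2) ^ 2 - (z q.1 - z q.2) ^ 2| := by
        calc ((ZN1 N z q.1 - ZN1 N z q.2) ^ 2 - (z q.1 - z q.2) ^ 2) * wseq N q
            ≤ |((ZN1 N z q.1 - ZN1 N z q.2) ^ 2 - (z q.1 - z q.2) ^ 2) * wseq N q| :=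
              le_abs_self _
          _ = |(ZN1 N z q.1 - ZN1 N z q.2) ^ 2 - (z q.1 - z q.2) ^ 2| * |wseq N q| :=
              abs_mul _ _
          _ ≤ |(ZN1 N z q.1 - ZN1 N z q.2) ^ 2 - (z q.1 - z q.2) ^ 2| * 1 :=
              mul_le_mul_of_nonneg_left (hwb1 N q) (abs_nonneg _)
          _ = _ := mul_one _
      have a2 : (z q.1 - z q.2) ^ 2 * (wseq N q - w q)
          ≤ (z q.1 - z q.2) ^ 2 * |wseq N q - w q| :=
        mul_le_mul_of_nonneg_left (le_abs_self _) (sq_nonneg _)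
      nlinarith [a1, a2]
    have hmono := integral_mono ((hfNwN_int N).sub hfw_int)
      (habs_int.add (hQ_int N)) hpt
    simp only [Pi.sub_apply, Pi.add_apply] at hmono
    rw [integral_sub (hfNwN_int N) hfw_int, integral_add habs_int (hQ_int N)] at hmono
    linarith
  -- Step 4: the L¹ distance of the squares
  have h4 : (∫ q, |(ZN1 N z q.1 - ZN1 N z q.2) ^ 2 - (z q.1 - z q.2) ^ 2| ∂μsq)
      ≤ (1 / (2 * δ) + δ) * (4 * ∫ x, (ZN1 N z x - z x) ^ 2 ∂μI)
        + 4 * δ * ∫ q, (z q.1 - z q.2) ^ 2 ∂μsq := by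
    have habs_int : Integrable
        (fun q : ℝ × ℝ => |(ZN1 N z q.1 - ZN1 N z q.2) ^ 2 - (z q.1 - z q.2) ^ 2|) μsq :=
      ((hfN_int N).sub hf_int).abs
    have hpt : ∀ q : ℝ × ℝ, |(ZN1 N z q.1 - ZN1 N z q.2) ^ 2 - (z q.1 - z q.2) ^ 2|
        ≤ (1 / (2 * δ) + δ) * ((ZN1 N z q.1 - ZN1 N z q.2) - (z q.1 - z q.2)) ^ 2
          + 4 * δ * (z q.1 - z q.2) ^ 2 :=
      fun q => sq_diff_bound hδ _ _
    have hmono := integral_mono habs_int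
      (((hDint N).const_mul _).add (hf_int.const_mul _)) hpt
    simp only [Pi.add_apply] at hmono
    rw [integral_add ((hDint N).const_mul _) (hf_int.const_mul _),
      integral_const_mul, integral_const_mul] at hmono
    have := mul_le_mul_of_nonneg_left (hDle N) (by positivity : (0:ℝ) ≤ 1 / (2 * δ) + δ)
    linarith
  -- Step 5: truncation bound for the w-difference term
  have h5 : (∫ q, |wseq N q - w q| * (z q.1 - z q.2) ^ 2 ∂μsq)
      ≤ (K : ℝ) * (∫ q, |wseq N q - w q| ∂μsq)
        + (1 + M) * ∫ q, ((z q.1 - z q.2) ^ 2 - min ((z q.1 - z q.2) ^ 2) (K : ℝ)) ∂μsq := by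
    have hpt : ∀ q : ℝ × ℝ, |wseq N q - w q| * (z q.1 - z q.2) ^ 2
        ≤ (K : ℝ) * |wseq N q - w q|
          + (1 + M) * ((z q.1 - z q.2) ^ 2 - min ((z q.1 - z q.2) ^ 2) (K : ℝ)) := by
      intro q
      have hb : |wseq N q - w q| ≤ 1 + M := by
        calc |wseq N q - w q| ≤ |wseq N q| + |w q| := abs_sub _ _
          _ ≤ 1 + M := add_le_add (hwb1 N q) (hM q)
      have hb0 : 0 ≤ |wseq N q - w q| := abs_nonneg _
      rcases le_total ((z q.1 - z q.2) ^ 2) (K : ℝ) with hle | hle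
      · rw [min_eq_left hle]
        have := mul_le_mul_of_nonneg_left hle hb0
        linarith
      · rw [min_eq_right hle]
        have h1 : |wseq N q - w q| * ((z q.1 - z q.2) ^ 2 - (K : ℝ))
            ≤ (1 + M) * ((z q.1 - z q.2) ^ 2 - (K : ℝ)) :=
          mul_le_mul_of_nonneg_right hb (by linarith)
        nlinarith
    have hsub_int : Integrable
        (fun q : ℝ × ℝ => (z q.1 - z q.2) ^ 2 - min ((z q.1 - z q.2) ^ 2) (K : ℝ)) μsq :=
      hf_int.sub (hmin_int K)
    have hrhs_int : Integrable (fun q : ℝ × ℝ => (K : ℝ) * |wseq N q - w q|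
        + (1 + M) * ((z q.1 - z q.2) ^ 2 - min ((z q.1 - z q.2) ^ 2) (K : ℝ))) μsq :=
      (((hwdiff_int N)).const_mul _).add (hsub_int.const_mul _)
    have hmono := integral_mono (hQ_int N) hrhs_int hpt
    rw [integral_add (((hwdiff_int N)).const_mul _) (hsub_int.const_mul _),
      integral_const_mul, integral_const_mul] at hmono
    linarith
  -- assemble
  have h1' := mul_le_mul_of_nonneg_left h1 hlam.le
  nlinarith [h1', h2, h3, h4, h5, hNa, hNb, hK, hδ4]
end

section
/- For every N and every symmetric matrix B with B_{ij} ≥ r on edges of G^N and 0 otherwise, the semi-discrete energy functional evaluated at the pixel function Q^N[B] equals the rescaled discrete energy: F^N_scaled[B] = (1/(2N^2)) ∑_{i,j} (B_{ij}(P_j−P_i)^2 + (ν/γ) B_{ij}^γ (L^N_{ij})^{γ+1}) W^N_{ij}, where P solves the discrete Kirchhoff law; i.e., 𝓕^N[Q^N[B]] = F^N[B]. -/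
open MeasureTheory Set Filter

/-- The two-dimensional projection `Z^N` onto piecewise constant functions
on the patches `I_i^N × I_j^N`. -/
noncomputable def ZN2 (N : ℕ) (u : ℝ × ℝ → ℝ) (z : ℝ × ℝ) : ℝ :=
  (N : ℝ) ^ 2 * ∫ s in (gridCell N z.1) ×ˢ (gridCell N z.2), u s

/-- Index of the grid cell containing `x` (clamped to `Fin N`). -/
noncomputable def gridIdxF (N : ℕ) (hN : 0 < N) (x : ℝ) : Fin N :=
  ⟨min ⌊x * (N : ℝ)⌋.toNat (N - 1), by omega⟩

/-- Pixel picture `Q^N` of a matrix. -/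
noncomputable def pixM (N : ℕ) (hN : 0 < N) (B : Fin N → Fin N → ℝ) : ℝ × ℝ → ℝ :=
  fun z => B (gridIdxF N hN z.1) (gridIdxF N hN z.2)

/-- Pixelation `Q^N` of a vector. -/
noncomputable def pixV (N : ℕ) (hN : 0 < N) (P : Fin N → ℝ) : ℝ → ℝ :=
  fun x => P (gridIdxF N hN x)

def cellN (N : ℕ) (i : Fin N) : Set ℝ :=
  Set.Ico ((i.val : ℝ) / N) (((i.val : ℝ) + 1) / N)

lemma gridIdxF_eq (N : ℕ) (hN : 0 < N) (i : Fin N) {x : ℝ} (hx : x ∈ cellN N i) :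
    gridIdxF N hN x = i := by
  obtain ⟨h1, h2⟩ := hx
  have hNR : (0:ℝ) < N := by exact_mod_cast hN
  have hf : ⌊x * (N:ℝ)⌋ = (i.val : ℤ) := by
    rw [Int.floor_eq_iff]
    constructor
    · push_cast
      exact (div_le_iff₀ hNR).mp h1
    · push_cast
      exact (lt_div_iff₀ hNR).mp h2
  have hi := i.isLt
  apply Fin.ext
  simp only [gridIdxF, hf, Int.toNat_natCast]
  omega

lemma mem_cellN_self (N : ℕ) (hN : 0 < N) {x : ℝ} (hx : x ∈ Set.Ico (0:ℝ) 1) :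
    x ∈ cellN N (gridIdxF N hN x) := by
  have hNR : (0:ℝ) < N := by exact_mod_cast hN
  obtain ⟨h0, h1⟩ := hx
  have ht0 : (0:ℝ) ≤ x * N := by positivity
  have ht1 : x * N < N := by nlinarith
  have hfl : (0:ℤ) ≤ ⌊x * (N:ℝ)⌋ := Int.floor_nonneg.mpr ht0
  have hflN : ⌊x * (N:ℝ)⌋ < (N:ℤ) := by
    have := Int.floor_le (x * (N:ℝ))
    by_contra h
    push_neg at h
    have : ((N:ℤ):ℝ) ≤ x * N := le_trans (by exact_mod_cast h) this
    push_cast at this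
    linarith
  have hk : min ⌊x * (N:ℝ)⌋.toNat (N - 1) = ⌊x * (N:ℝ)⌋.toNat := by omega
  constructor
  · show ((gridIdxF N hN x : Fin N).val : ℝ) / N ≤ x
    rw [div_le_iff₀ hNR]
    simp only [gridIdxF, hk]
    have := Int.floor_le (x * (N:ℝ))
    calc ((⌊x * (N:ℝ)⌋.toNat : ℕ) : ℝ) = ((⌊x * (N:ℝ)⌋ : ℤ) : ℝ) := by
          exact_mod_cast congrArg (Int.cast : ℤ → ℝ) (Int.toNat_of_nonneg hfl)
      _ ≤ x * N := this
  · show x < (((gridIdxF N hN x : Fin N).val : ℝ) + 1) / N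
    rw [lt_div_iff₀ hNR]
    simp only [gridIdxF, hk]
    have := Int.lt_floor_add_one (x * (N:ℝ))
    calc x * N < (⌊x * (N:ℝ)⌋ : ℝ) + 1 := this
      _ = ((⌊x * (N:ℝ)⌋.toNat : ℕ) : ℝ) + 1 := by
          rw [show ((⌊x * (N:ℝ)⌋.toNat : ℕ) : ℝ) = ((⌊x * (N:ℝ)⌋ : ℤ) : ℝ) from by
            exact_mod_cast congrArg (Int.cast : ℤ → ℝ) (Int.toNat_of_nonneg hfl)]

lemma cellN_subset (N : ℕ) (hN : 0 < N) (i : Fin N) : cellN N i ⊆ Set.Ico (0:ℝ) 1 := by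
  have hNR : (0:ℝ) < N := by exact_mod_cast hN
  intro x ⟨h1, h2⟩
  constructor
  · exact le_trans (by positivity) h1
  · have hi : (i.val : ℝ) + 1 ≤ N := by exact_mod_cast i.isLt
    calc x < ((i.val : ℝ) + 1) / N := h2
      _ ≤ (N:ℝ) / N := by gcongr
      _ = 1 := div_self hNR.ne'

lemma iUnion_cellN (N : ℕ) (hN : 0 < N) : (⋃ i : Fin N, cellN N i) = Set.Ico (0:ℝ) 1 := by
  apply Set.Subset.antisymm
  · exact Set.iUnion_subset fun i => cellN_subset N hN i
  · intro x hx
    exact Set.mem_iUnion.mpr ⟨gridIdxF N hN x, mem_cellN_self N hN hx⟩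

lemma cellN_disjoint (N : ℕ) (hN : 0 < N) {i j : Fin N} (hij : i ≠ j) :
    Disjoint (cellN N i) (cellN N j) := by
  have hNR : (0:ℝ) < N := by exact_mod_cast hN
  rw [cellN, cellN, Set.Ico_disjoint_Ico]
  rcases lt_or_gt_of_ne (Fin.val_ne_of_ne hij) with h | h
  · have : ((i.val : ℝ) + 1) / N ≤ (j.val : ℝ) / N := by
      gcongr
      exact_mod_cast h
    exact le_trans (min_le_left _ _) (le_trans this (le_max_right _ _))
  · have : ((j.val : ℝ) + 1) / N ≤ (i.val : ℝ) / N := by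
      gcongr
      exact_mod_cast h
    exact le_trans (min_le_right _ _) (le_trans this (le_max_left _ _))

lemma volume_cellN (N : ℕ) (hN : 0 < N) (i : Fin N) :
    volume (cellN N i) = ENNReal.ofReal (1 / N) := by
  rw [cellN, Real.volume_Ico, div_sub_div_same, add_sub_cancel_left]

lemma measurableSet_cellN (N : ℕ) (i : Fin N) : MeasurableSet (cellN N i) :=
  measurableSet_Ico

lemma setInt_cells (N : ℕ) (hN : 0 < N) (f : ℝ → ℝ)
    (hf : ∀ i : Fin N, IntegrableOn f (cellN N i)) :
    ∫ x, f x ∂μI = ∑ i : Fin N, ∫ x in cellN N i, f x := by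
  have h1 : (∫ x, f x ∂μI) = ∫ x in Set.Icc (0:ℝ) 1, f x := rfl
  rw [h1, integral_Icc_eq_integral_Ico, ← iUnion_cellN N hN,
    show (⋃ i : Fin N, cellN N i) = ⋃ i ∈ (Finset.univ : Finset (Fin N)), cellN N i by simp]
  exact integral_biUnion_finset _ (fun i _ => measurableSet_Ico)
    (fun i _ j _ hij => cellN_disjoint N hN hij) (fun i _ => hf i)

lemma integral_pixV' (N : ℕ) (hN : 0 < N) (g : Fin N → ℝ) :
    ∫ x, g (gridIdxF N hN x) ∂μI = (1 / N) * ∑ i, g i := by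
  have hint : ∀ i : Fin N, IntegrableOn (fun x => g (gridIdxF N hN x)) (cellN N i) :=
    fun i => (integrableOn_const measure_Ico_lt_top.ne).congr_fun
      (fun x hx => by rw [gridIdxF_eq N hN i hx]) (measurableSet_cellN N i)
  rw [setInt_cells N hN _ hint, Finset.mul_sum]
  apply Finset.sum_congr rfl
  intro i _
  rw [setIntegral_congr_fun (measurableSet_cellN N i)
      (fun x hx => by simp only [gridIdxF_eq N hN i hx] :
        Set.EqOn (fun x => g (gridIdxF N hN x)) (fun _ => g i) (cellN N i)),
    setIntegral_const, measureReal_def, volume_cellN N hN i, ENNReal.toReal_ofReal (by positivity),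
    smul_eq_mul]

lemma integral_sigma_pixV (N : ℕ) (hN : 0 < N) (σ : ℝ → ℝ)
    (hσ : IntegrableOn σ (Set.Icc (0:ℝ) 1)) (Φ : Fin N → ℝ) :
    ∫ x, σ x * Φ (gridIdxF N hN x) ∂μI
      = ∑ i : Fin N, Φ i * ∫ x in Set.Icc ((i.val:ℝ)/N) (((i.val:ℝ)+1)/N), σ x := by
  have hσc : ∀ i : Fin N, IntegrableOn σ (cellN N i) :=
    fun i => hσ.mono_set ((cellN_subset N hN i).trans Set.Ico_subset_Icc_self)
  have hint : ∀ i : Fin N, IntegrableOn (fun x => σ x * Φ (gridIdxF N hN x)) (cellN N i) :=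
    fun i => IntegrableOn.congr_fun ((hσc i).mul_const (Φ i))
      (fun x hx => by rw [gridIdxF_eq N hN i hx]) (measurableSet_cellN N i)
  rw [setInt_cells N hN _ hint]
  apply Finset.sum_congr rfl
  intro i _
  rw [setIntegral_congr_fun (measurableSet_cellN N i)
      (fun x hx => by simp only [gridIdxF_eq N hN i hx] :
        Set.EqOn (fun x => σ x * Φ (gridIdxF N hN x)) (fun x => σ x * Φ i) (cellN N i)),
    integral_mul_const, integral_Icc_eq_integral_Ico, mul_comm]
  rfl

lemma IccSq_ae_IcoSq :
    (Set.Icc (0:ℝ) 1 ×ˢ Set.Icc (0:ℝ) 1 : Set (ℝ×ℝ))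
      =ᵐ[volume.prod volume] (Set.Ico (0:ℝ) 1 ×ˢ Set.Ico (0:ℝ) 1) := by
  rw [MeasureTheory.ae_eq_set]
  constructor
  · have hsub : (Set.Icc (0:ℝ) 1 ×ˢ Set.Icc (0:ℝ) 1) \ (Set.Ico (0:ℝ) 1 ×ˢ Set.Ico (0:ℝ) 1)
        ⊆ (({1} : Set ℝ) ×ˢ (Set.univ : Set ℝ)) ∪ ((Set.univ : Set ℝ) ×ˢ ({1} : Set ℝ)) := by
      rintro ⟨x, y⟩ ⟨⟨hx, hy⟩, h⟩
      simp only [Set.mem_prod, Set.mem_Ico, Set.mem_Icc] at hx hy h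
      simp only [Set.mem_union, Set.mem_prod, Set.mem_singleton_iff, Set.mem_univ,
        and_true, true_and]
      by_contra hc
      push_neg at hc
      exact h ⟨⟨hx.1, lt_of_le_of_ne hx.2 hc.1⟩, ⟨hy.1, lt_of_le_of_ne hy.2 hc.2⟩⟩
    refine measure_mono_null hsub ?_
    apply measure_union_null <;> rw [Measure.prod_prod] <;> simp
  · have h0 : (Set.Ico (0:ℝ) 1 ×ˢ Set.Ico (0:ℝ) 1) \ (Set.Icc (0:ℝ) 1 ×ˢ Set.Icc (0:ℝ) 1)
        = ∅ := Set.diff_eq_empty.mpr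
      (Set.prod_mono Set.Ico_subset_Icc_self Set.Ico_subset_Icc_self)
    rw [h0]
    simp

lemma integral_pixM' (N : ℕ) (hN : 0 < N) (f : Fin N → Fin N → ℝ) :
    ∫ z, f (gridIdxF N hN z.1) (gridIdxF N hN z.2) ∂μsq
      = (1 / (N:ℝ)^2) * ∑ i, ∑ j, f i j := by
  have hμ : μsq = (volume.prod volume).restrict
      ((Set.Icc (0:ℝ) 1) ×ˢ (Set.Icc (0:ℝ) 1)) := by
    rw [μsq, μI, Measure.prod_restrict]
  rw [hμ, setIntegral_congr_set IccSq_ae_IcoSq]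
  have hU : (Set.Ico (0:ℝ) 1 ×ˢ Set.Ico (0:ℝ) 1)
      = ⋃ p ∈ (Finset.univ : Finset (Fin N × Fin N)), (cellN N p.1 ×ˢ cellN N p.2) := by
    ext ⟨x, y⟩
    simp only [Set.mem_prod, ← iUnion_cellN N hN, Set.mem_iUnion, Finset.mem_univ,
      Set.iUnion_true]
    constructor
    · rintro ⟨⟨i, hi⟩, ⟨j, hj⟩⟩; exact ⟨(i, j), hi, hj⟩
    · rintro ⟨⟨i, j⟩, hi, hj⟩; exact ⟨⟨i, hi⟩, ⟨j, hj⟩⟩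
  have hsqfin : ∀ p : Fin N × Fin N,
      (volume.prod volume) (cellN N p.1 ×ˢ cellN N p.2) < ⊤ := by
    intro p
    rw [Measure.prod_prod]
    exact ENNReal.mul_lt_top measure_Ico_lt_top measure_Ico_lt_top
  have hmeas : ∀ p : Fin N × Fin N, MeasurableSet (cellN N p.1 ×ˢ cellN N p.2) :=
    fun p => (measurableSet_cellN N p.1).prod (measurableSet_cellN N p.2)
  have hEq : ∀ p : Fin N × Fin N, Set.EqOn
      (fun z : ℝ × ℝ => f (gridIdxF N hN z.1) (gridIdxF N hN z.2))
      (fun _ => f p.1 p.2) (cellN N p.1 ×ˢ cellN N p.2) := by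
    intro p z hz
    simp only
    rw [gridIdxF_eq N hN p.1 hz.1, gridIdxF_eq N hN p.2 hz.2]
  rw [hU, integral_biUnion_finset _ (fun p _ => hmeas p)
    (fun p _ q _ hpq => by
      have h : p.1 ≠ q.1 ∨ p.2 ≠ q.2 := by
        by_contra hc; push_neg at hc; exact hpq (Prod.ext hc.1 hc.2)
      rcases h with h | h
      · exact Set.disjoint_left.mpr (fun z hz hz' =>
          Set.disjoint_left.mp (cellN_disjoint N hN h) hz.1 hz'.1)
      · exact Set.disjoint_left.mpr (fun z hz hz' =>
          Set.disjoint_left.mp (cellN_disjoint N hN h) hz.2 hz'.2))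
    (fun p _ => (integrableOn_const (hsqfin p).ne).congr_fun
      (fun z hz => (hEq p hz).symm) (hmeas p))]
  have hval : ∀ p : Fin N × Fin N,
      (∫ z in cellN N p.1 ×ˢ cellN N p.2,
        f (gridIdxF N hN z.1) (gridIdxF N hN z.2) ∂(volume.prod volume))
      = (1 / (N:ℝ)^2) * f p.1 p.2 := by
    intro p
    rw [setIntegral_congr_fun (hmeas p) (hEq p), setIntegral_const, measureReal_def, Measure.prod_prod,
      volume_cellN N hN p.1, volume_cellN N hN p.2, ← ENNReal.ofReal_mul (by positivity),
      ENNReal.toReal_ofReal (by positivity), smul_eq_mul]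
    congr 1
    rw [div_mul_div_comm, one_mul, sq]
  rw [Finset.sum_congr rfl (fun p _ => hval p), ← Finset.univ_product_univ,
    Finset.sum_product, Finset.mul_sum]
  exact Finset.sum_congr rfl (fun i _ => by rw [Finset.mul_sum])

lemma sym_sum {N : ℕ} (E : Fin N → Fin N → ℝ) (u v : Fin N → ℝ)
    (hE : ∀ i j, E i j = E j i) :
    ∑ i, ∑ j, E i j * (u i - u j) * (v i - v j)
      = 2 * ∑ i, v i * ∑ j, E i j * (u i - u j) := by
  have h2 : ∑ i, ∑ j, E i j * (u i - u j) * v j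
      = - ∑ i, ∑ j, E i j * (u i - u j) * v i :=
    calc ∑ i, ∑ j, E i j * (u i - u j) * v j
        = ∑ j, ∑ i, E i j * (u i - u j) * v j := Finset.sum_comm
      _ = ∑ j, ∑ i, -(E j i * (u j - u i) * v j) :=
          Finset.sum_congr rfl (fun j _ => Finset.sum_congr rfl
            (fun i _ => by rw [hE i j]; ring))
      _ = - ∑ i, ∑ j, E i j * (u i - u j) * v i := by
          simp [Finset.sum_neg_distrib]
  have h3 : ∑ i, v i * ∑ j, E i j * (u i - u j)
      = ∑ i, ∑ j, E i j * (u i - u j) * v i := by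
    apply Finset.sum_congr rfl; intro i _
    rw [Finset.mul_sum]
    exact Finset.sum_congr rfl (fun j _ => by ring)
  calc ∑ i, ∑ j, E i j * (u i - u j) * (v i - v j)
      = ∑ i, ((∑ j, E i j * (u i - u j) * v i) - ∑ j, E i j * (u i - u j) * v j) :=
        Finset.sum_congr rfl (fun i _ => by
          rw [← Finset.sum_sub_distrib]
          exact Finset.sum_congr rfl (fun j _ => by ring))
    _ = (∑ i, ∑ j, E i j * (u i - u j) * v i) - ∑ i, ∑ j, E i j * (u i - u j) * v j :=
        Finset.sum_sub_distrib _ _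
    _ = 2 * ∑ i, v i * ∑ j, E i j * (u i - u j) := by rw [h2, h3]; ring

/-- Reformulation of the discrete energy: for admissible conductivity matrices `B`,
the semi-discrete energy functional evaluated at the pixel function `Q^N[B]`,
with `p^N` the semi-discrete Poisson solution, equals the rescaled discrete energy
`F^N[B]` computed from the discrete Kirchhoff solution `P`. -/
theorem semidiscrete_equals_discrete_energy (N : ℕ) (hN : 0 < N)
    (γ ν r lam : ℝ) (hγ : 1 < γ) (hν : 0 < ν) (hr : 0 < r) (hlam : 0 < lam)
    (σ : ℝ → ℝ) (hσ : MemLp σ 2 μI) (hσ0 : ∫ x, σ x ∂μI = 0)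
    (W B L : Fin N → Fin N → ℝ)
    (hW01 : ∀ i j, W i j = 0 ∨ W i j = 1) (hWsym : ∀ i j, W i j = W j i)
    (hconn : ∀ z : Fin N → ℝ, (∑ i, z i) = 0 →
      lam * N * ∑ i, (z i) ^ 2 ≤ ∑ i, ∑ j, (z i - z j) ^ 2 * W i j)
    (hLsym : ∀ i j, L i j = L j i) (hLpos : ∀ i j, 0 < L i j) (hL1 : ∀ i j, L i j ≤ 1)
    (hBsym : ∀ i j, B i j = B j i)
    (hBr : ∀ i j, W i j = 1 → r ≤ B i j) (hB0 : ∀ i j, W i j = 0 → B i j = 0)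
    (P : Fin N → ℝ) (hPsum : ∑ i, P i = 0)
    (hK : ∀ i : Fin N, -(1 / (N : ℝ) ^ 2) * ∑ j, W i j * B i j * (P j - P i)
      = ∫ x in Set.Icc ((i.val : ℝ) / N) (((i.val : ℝ) + 1) / N), σ x)
    (pN : ℝ → ℝ) (hpNpc : ∃ Q : Fin N → ℝ, pN = pixV N hN Q)
    (hpN0 : ∫ x, pN x ∂μI = 0)
    (hpNsol : ∀ Φ : Fin N → ℝ, (∑ i, Φ i = 0) →
      (1 / 2) * ∫ z, pixM N hN B z * (pN z.1 - pN z.2)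
          * (pixV N hN Φ z.1 - pixV N hN Φ z.2) * pixM N hN W z ∂μsq
        = ∫ x, σ x * pixV N hN Φ x ∂μI) :
    (1 / 2) * ∫ z, pixM N hN B z * (pN z.1 - pN z.2) ^ 2 * pixM N hN W z ∂μsq
      + (ν / (2 * γ)) * ∫ z, pixM N hN B z ^ γ * pixM N hN L z ^ (γ + 1)
          * pixM N hN W z ∂μsq
      = (1 / (2 * (N : ℝ) ^ 2)) * ∑ i, ∑ j,
          (B i j * (P j - P i) ^ 2 + (ν / γ) * B i j ^ γ * L i j ^ (γ + 1)) * W i j := by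
  obtain ⟨Q, rfl⟩ := hpNpc
  have hNR : (0:ℝ) < N := by exact_mod_cast hN
  have hNne : ((N:ℝ)) ≠ 0 := hNR.ne'
  haveI : IsFiniteMeasure μI := by
    constructor
    rw [μI, Measure.restrict_apply_univ]
    exact measure_Icc_lt_top
  have hσint : IntegrableOn σ (Set.Icc (0:ℝ) 1) :=
    hσ.integrable (by norm_num : (1:ENNReal) ≤ 2)
  set Φ : Fin N → ℝ := fun i => (Q i - P i) - (∑ k, (Q k - P k)) / N with hΦ
  have hΦsum : ∑ i, Φ i = 0 := by
    rw [hΦ]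
    rw [Finset.sum_sub_distrib, Finset.sum_const, Finset.card_univ, Fintype.card_fin,
      nsmul_eq_mul, mul_div_cancel₀ _ hNne, sub_self]
  have hsol := hpNsol Φ hΦsum
  simp only [pixM, pixV] at hsol
  have e1 : (∫ z : ℝ × ℝ, B (gridIdxF N hN z.1) (gridIdxF N hN z.2)
      * (Q (gridIdxF N hN z.1) - Q (gridIdxF N hN z.2))
      * (Φ (gridIdxF N hN z.1) - Φ (gridIdxF N hN z.2))
      * W (gridIdxF N hN z.1) (gridIdxF N hN z.2) ∂μsq)
      = (1/(N:ℝ)^2) * ∑ i, ∑ j, B i j * (Q i - Q j) * (Φ i - Φ j) * W i j :=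
    integral_pixM' N hN (fun a b => B a b * (Q a - Q b) * (Φ a - Φ b) * W a b)
  have e2 : (∫ x : ℝ, σ x * Φ (gridIdxF N hN x) ∂μI)
      = ∑ i, Φ i * ∫ x in Set.Icc ((i.val:ℝ)/N) (((i.val:ℝ)+1)/N), σ x :=
    integral_sigma_pixV N hN σ hσint Φ
  rw [e1, e2] at hsol
  have hQform : ∑ i, ∑ j, B i j * (Q i - Q j) * (Φ i - Φ j) * W i j
      = ∑ i, ∑ j, (W i j * B i j) * (Q i - Q j) * (Φ i - Φ j) :=
    Finset.sum_congr rfl (fun i _ => Finset.sum_congr rfl (fun j _ => by ring))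
  have hQ2 : ∑ i, ∑ j, (W i j * B i j) * (Q i - Q j) * (Φ i - Φ j)
      = 2 * ∑ i, Φ i * ∑ j, (W i j * B i j) * (Q i - Q j) :=
    sym_sum (fun i j => W i j * B i j) Q Φ (fun i j => by show W i j * B i j = W j i * B j i; rw [hWsym, hBsym])
  have hXXP : ∑ i, Φ i * ∫ x in Set.Icc ((i.val:ℝ)/N) (((i.val:ℝ)+1)/N), σ x
      = (1/(N:ℝ)^2) * ∑ i, Φ i * ∑ j, (W i j * B i j) * (P i - P j) := by
    rw [Finset.mul_sum]
    apply Finset.sum_congr rfl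
    intro i _
    rw [← hK i]
    have hflip : ∑ j, (W i j * B i j) * (P i - P j)
        = - ∑ j, W i j * B i j * (P j - P i) := by
      rw [← Finset.sum_neg_distrib]
      exact Finset.sum_congr rfl (fun j _ => by ring)
    rw [hflip]
    ring
  have hXQ : ∑ i, Φ i * ∑ j, (W i j * B i j) * (Q i - Q j)
      = ∑ i, Φ i * ∑ j, (W i j * B i j) * (P i - P j) := by
    rw [hQform, hQ2, hXXP] at hsol
    have hN2 : ((N:ℝ)^2) ≠ 0 := by positivity
    field_simp at hsol
    linarith
  have hdiff : ∑ i, Φ i * ∑ j, (W i j * B i j) * (Φ i - Φ j) = 0 := by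
    have hsplit : ∀ i : Fin N, ∑ j, (W i j * B i j) * (Φ i - Φ j)
        = (∑ j, (W i j * B i j) * (Q i - Q j))
          - ∑ j, (W i j * B i j) * (P i - P j) := by
      intro i
      rw [← Finset.sum_sub_distrib]
      apply Finset.sum_congr rfl
      intro j _
      rw [hΦ]
      ring
    calc ∑ i, Φ i * ∑ j, (W i j * B i j) * (Φ i - Φ j)
        = ∑ i, (Φ i * ∑ j, (W i j * B i j) * (Q i - Q j)
            - Φ i * ∑ j, (W i j * B i j) * (P i - P j)) := by
          apply Finset.sum_congr rfl
          intro i _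
          rw [hsplit i]
          ring
      _ = 0 := by rw [Finset.sum_sub_distrib, hXQ, sub_self]
  have hkey : ∑ i, ∑ j, (W i j * B i j) * (Φ i - Φ j) * (Φ i - Φ j) = 0 := by
    have h2 : ∑ i, ∑ j, (W i j * B i j) * (Φ i - Φ j) * (Φ i - Φ j)
        = 2 * ∑ i, Φ i * ∑ j, (W i j * B i j) * (Φ i - Φ j) :=
      sym_sum (fun i j => W i j * B i j) Φ Φ (fun i j => by show W i j * B i j = W j i * B j i; rw [hWsym, hBsym])
    rw [h2, hdiff, mul_zero]
  have hΦzero : ∀ i, Φ i = 0 := by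
    have hb1 : r * ∑ i, ∑ j, (Φ i - Φ j)^2 * W i j
        ≤ ∑ i, ∑ j, (W i j * B i j) * (Φ i - Φ j) * (Φ i - Φ j) := by
      rw [Finset.mul_sum]
      apply Finset.sum_le_sum
      intro i _
      rw [Finset.mul_sum]
      apply Finset.sum_le_sum
      intro j _
      rcases hW01 i j with h0 | h1
      · simp [h0]
      · rw [h1]
        nlinarith [sq_nonneg (Φ i - Φ j), hBr i j h1]
    have hb2 := hconn Φ hΦsum
    have hsqnn : (0:ℝ) ≤ ∑ i, (Φ i)^2 :=
      Finset.sum_nonneg (fun i _ => sq_nonneg (Φ i))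
    have hsq : ∑ i, (Φ i)^2 = 0 := by
      nlinarith [mul_le_mul_of_nonneg_left hb2 hr.le, hb1, hkey, mul_pos hr (mul_pos hlam hNR)]
    intro i
    have h0 := (Finset.sum_eq_zero_iff_of_nonneg
      (fun j (_ : j ∈ Finset.univ) => sq_nonneg (Φ j))).mp hsq i (Finset.mem_univ i)
    exact pow_eq_zero_iff two_ne_zero |>.mp h0
  have hQP : ∀ i j, Q i - Q j = P i - P j := by
    intro i j
    have hi := hΦzero i
    have hj := hΦzero j
    rw [hΦ] at hi hj
    simp only at hi hj
    linarith
  simp only [pixM, pixV]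
  have g1 : (∫ z : ℝ × ℝ, B (gridIdxF N hN z.1) (gridIdxF N hN z.2)
      * (Q (gridIdxF N hN z.1) - Q (gridIdxF N hN z.2))^2
      * W (gridIdxF N hN z.1) (gridIdxF N hN z.2) ∂μsq)
      = (1/(N:ℝ)^2) * ∑ i, ∑ j, B i j * (Q i - Q j)^2 * W i j :=
    integral_pixM' N hN (fun a b => B a b * (Q a - Q b)^2 * W a b)
  have g2 : (∫ z : ℝ × ℝ, B (gridIdxF N hN z.1) (gridIdxF N hN z.2) ^ γ
      * L (gridIdxF N hN z.1) (gridIdxF N hN z.2) ^ (γ+1)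
      * W (gridIdxF N hN z.1) (gridIdxF N hN z.2) ∂μsq)
      = (1/(N:ℝ)^2) * ∑ i, ∑ j, B i j ^ γ * L i j ^ (γ+1) * W i j :=
    integral_pixM' N hN (fun a b => B a b ^ γ * L a b ^ (γ+1) * W a b)
  rw [g1, g2]
  have hswap : ∑ i, ∑ j, B i j * (Q i - Q j)^2 * W i j
      = ∑ i, ∑ j, B i j * (P j - P i)^2 * W i j := by
    apply Finset.sum_congr rfl
    intro i _
    apply Finset.sum_congr rfl
    intro j _
    rw [hQP i j]
    ring
  rw [hswap]
  have hexp : ∑ i, ∑ j, (B i j * (P j - P i)^2 + (ν/γ) * B i j ^ γ * L i j ^ (γ+1)) * W i j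
      = (∑ i, ∑ j, B i j * (P j - P i)^2 * W i j)
        + (ν/γ) * ∑ i, ∑ j, B i j ^ γ * L i j ^ (γ+1) * W i j := by
    rw [Finset.mul_sum, ← Finset.sum_add_distrib]
    apply Finset.sum_congr rfl
    intro i _
    rw [Finset.mul_sum, ← Finset.sum_add_distrib]
    apply Finset.sum_congr rfl
    intro j _
    ring
  rw [hexp]
  have hγne : γ ≠ 0 := by linarith
  field_simp
end

section
/- If the kernel b = Q^N[B] is piecewise constant on the N×N grid, then the unique solution p ∈ L^2_0([0,1]) of the continuum weak Poisson equation with kernel b and graphon w^N = Q^N[W^N] projects to the semi-discrete solution: p^N = Z^N[p], and the values P_i of p^N on I_i^N form a zero-sum solution of the discrete Kirchhoff law with conductivities B and sources S_i^N = ∫_{I_i^N} σ. -/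
open MeasureTheory Set Filter

set_option linter.unusedSectionVars false

instance : IsFiniteMeasure μI := by
  constructor
  rw [μI, Measure.restrict_apply_univ, Real.volume_Icc]
  exact ENNReal.ofReal_lt_top

instance : IsFiniteMeasure μsq := by unfold μsq; infer_instance

section Aux
variable (N : ℕ) (hN : 0 < N)

lemma idx_eq (i : Fin N) {x : ℝ}
    (hx : x ∈ Set.Ico ((i.val : ℝ) / N) (((i.val : ℝ) + 1) / N)) :
    gridIdxF N hN x = i := by
  have hN' : (0 : ℝ) < N := by exact_mod_cast hN
  obtain ⟨h1, h2⟩ := hx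
  have hf : ⌊x * (N : ℝ)⌋ = (i.val : ℤ) := by
    rw [Int.floor_eq_iff]
    constructor
    · push_cast
      calc (i.val : ℝ) = (i.val : ℝ) / N * N := by field_simp
        _ ≤ x * N := by nlinarith
    · push_cast
      have : x * (N : ℝ) < ((i.val : ℝ) + 1) / N * N := by nlinarith
      calc x * (N : ℝ) < ((i.val : ℝ) + 1) / N * N := this
        _ = (i.val : ℝ) + 1 := by field_simp
  unfold gridIdxF
  apply Fin.ext
  simp only [hf]
  have := i.isLt
  omega

lemma measurable_gridIdxF : Measurable (gridIdxF N hN) := by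
  have h1 : Measurable fun x : ℝ => ⌊x * (N : ℝ)⌋ := (measurable_id.mul_const _).floor
  exact (measurable_of_countable
    (fun n : ℤ => (⟨min n.toNat (N - 1), by omega⟩ : Fin N))).comp h1

include hN in
lemma cellvol (i : Fin N) :
    (volume (Set.Icc ((i.val : ℝ) / N) (((i.val : ℝ) + 1) / N))).toReal = 1 / N := by
  have hN' : (0 : ℝ) < N := by exact_mod_cast hN
  rw [Real.volume_Icc]
  have h : ((i.val : ℝ) + 1) / N - (i.val : ℝ) / N = 1 / N := by field_simp; ring
  rw [h, ENNReal.toReal_ofReal (by positivity)]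

include hN in
lemma splitI (f : ℝ → ℝ) (hf : Integrable f μI) :
    ∫ x, f x ∂μI = ∑ i : Fin N, ∫ x in Set.Icc ((i.val : ℝ) / N) (((i.val : ℝ) + 1) / N), f x := by
  have hN' : (0 : ℝ) < N := by exact_mod_cast hN
  have hIO : IntegrableOn f (Set.Icc (0:ℝ) 1) volume := hf
  have hsub : ∀ k : ℕ, k + 1 ≤ N → Set.Icc ((k:ℝ)/N) (((k:ℝ)+1)/N) ⊆ Set.Icc (0:ℝ) 1 := by
    intro k hk
    apply Set.Icc_subset_Icc
    · positivity
    · rw [div_le_one hN']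
      have : ((k:ℝ)+1) ≤ N := by exact_mod_cast hk
      linarith
  have hii : ∀ k : ℕ, k < N → IntervalIntegrable f volume ((k:ℝ)/N) (((k+1:ℕ):ℝ)/N) := by
    intro k hk
    apply IntegrableOn.intervalIntegrable
    apply hIO.mono_set
    rw [Set.uIcc_of_le (by apply div_le_div_of_nonneg_right _ hN'.le; push_cast; linarith)]
    push_cast
    exact hsub k hk
  have key := intervalIntegral.sum_integral_adjacent_intervals (μ := volume)
    (a := fun k : ℕ => (k:ℝ)/N) (n := N) (fun k hk => hii k hk)
  simp only [Nat.cast_zero, zero_div, Nat.cast_ofNat] at key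
  have hend : ((N:ℝ))/N = 1 := by field_simp
  calc ∫ x, f x ∂μI = ∫ x in Set.Icc (0:ℝ) 1, f x := rfl
    _ = ∫ x in Set.Ioc (0:ℝ) 1, f x := (setIntegral_congr_set Ioc_ae_eq_Icc).symm
    _ = ∫ x in (0:ℝ)..1, f x := (intervalIntegral.integral_of_le (by norm_num)).symm
    _ = ∑ k ∈ Finset.range N, ∫ x in ((k:ℝ)/N)..(((k+1:ℕ):ℝ)/N), f x := by
        rw [← hend] at *; rw [← key]
    _ = ∑ i : Fin N, ∫ x in Set.Icc ((i.val : ℝ) / N) (((i.val : ℝ) + 1) / N), f x := by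
        rw [Finset.sum_range fun k => ∫ x in ((k:ℝ)/N)..(((k+1:ℕ):ℝ)/N), f x]
        apply Finset.sum_congr rfl
        intro i _
        have hle : ((i.val:ℝ))/N ≤ ((i.val+1:ℕ):ℝ)/N := by
          apply div_le_div_of_nonneg_right _ hN'.le; push_cast; linarith
        rw [intervalIntegral.integral_of_le hle]
        push_cast
        exact setIntegral_congr_set Ioc_ae_eq_Icc

include hN in
lemma sum_cells (h : Fin N → ℝ → ℝ)
    (hint : Integrable (fun x => h (gridIdxF N hN x) x) μI) :
    ∫ x, h (gridIdxF N hN x) x ∂μI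
      = ∑ i : Fin N, ∫ x in Set.Icc ((i.val : ℝ) / N) (((i.val : ℝ) + 1) / N), h i x := by
  rw [splitI N hN _ hint]
  apply Finset.sum_congr rfl
  intro i _
  calc ∫ x in Set.Icc ((i.val : ℝ) / N) (((i.val : ℝ) + 1) / N), h (gridIdxF N hN x) x
      = ∫ x in Set.Ico ((i.val : ℝ) / N) (((i.val : ℝ) + 1) / N), h (gridIdxF N hN x) x :=
        (setIntegral_congr_set Ico_ae_eq_Icc).symm
    _ = ∫ x in Set.Ico ((i.val : ℝ) / N) (((i.val : ℝ) + 1) / N), h i x := by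
        apply setIntegral_congr_fun measurableSet_Ico
        intro x hx
        show h (gridIdxF N hN x) x = h i x
        rw [idx_eq N hN i hx]
    _ = ∫ x in Set.Icc ((i.val : ℝ) / N) (((i.val : ℝ) + 1) / N), h i x :=
        setIntegral_congr_set Ico_ae_eq_Icc

lemma integrable_fst' {f : ℝ → ℝ} (hf : Integrable f μI) :
    Integrable (fun z : ℝ × ℝ => f z.1) μsq := by
  rw [μsq]
  refine (integrable_prod_iff (hf.1.comp_fst)).2 ⟨?_, ?_⟩
  · exact Eventually.of_forall fun x => by simpa using integrable_const (f x)
  · have : Integrable (fun x => (μI Set.univ).toReal * ‖f x‖) μI := hf.norm.const_mul _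
    apply this.congr
    exact Eventually.of_forall fun x => by simp [integral_const, mul_comm, measureReal_def]

lemma integrable_snd' {f : ℝ → ℝ} (hf : Integrable f μI) :
    Integrable (fun z : ℝ × ℝ => f z.2) μsq := by
  rw [μsq]
  refine (integrable_prod_iff (hf.1.comp_snd)).2 ⟨?_, ?_⟩
  · exact Eventually.of_forall fun _ => hf
  · apply (integrable_const (∫ y, ‖f y‖ ∂μI)).congr
    exact Eventually.of_forall fun x => rfl

include hN in
lemma pix2_bound (g : Fin N → Fin N → ℝ) :
    ∀ a b : Fin N, ‖g a b‖ ≤ ∑ i : Fin N, ∑ j : Fin N, |g i j| := by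
  intro a b
  rw [Real.norm_eq_abs]
  calc |g a b| ≤ ∑ j : Fin N, |g a j| :=
        Finset.single_le_sum (f := fun j => |g a j|) (fun j _ => abs_nonneg _) (Finset.mem_univ b)
    _ ≤ ∑ i : Fin N, ∑ j : Fin N, |g i j| :=
        Finset.single_le_sum (f := fun i => ∑ j : Fin N, |g i j|)
          (fun i _ => Finset.sum_nonneg fun j _ => abs_nonneg _) (Finset.mem_univ a)

lemma meas_pix2 (g : Fin N → Fin N → ℝ) :
    Measurable (fun z : ℝ × ℝ => g (gridIdxF N hN z.1) (gridIdxF N hN z.2)) := by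
  have : Measurable fun pr : Fin N × Fin N => g pr.1 pr.2 := measurable_of_countable _
  exact this.comp (((measurable_gridIdxF N hN).comp measurable_fst).prodMk
    ((measurable_gridIdxF N hN).comp measurable_snd))

include hN in
lemma cell_const (V : Fin N → ℝ) (i : Fin N) :
    ∫ x in Set.Icc ((i.val : ℝ) / N) (((i.val : ℝ) + 1) / N), pixV N hN V x
      = (1 / N) * V i := by
  calc ∫ x in Set.Icc ((i.val : ℝ) / N) (((i.val : ℝ) + 1) / N), pixV N hN V x
      = ∫ x in Set.Ico ((i.val : ℝ) / N) (((i.val : ℝ) + 1) / N), pixV N hN V x :=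
        (setIntegral_congr_set Ico_ae_eq_Icc).symm
    _ = ∫ _x in Set.Ico ((i.val : ℝ) / N) (((i.val : ℝ) + 1) / N), V i := by
        apply setIntegral_congr_fun measurableSet_Ico
        intro x hx
        simp only [pixV, idx_eq N hN i hx]
    _ = (1 / N) * V i := by
        rw [setIntegral_const, smul_eq_mul]
        congr 1
        rw [measureReal_def, Real.volume_Ico]
        have hN' : (0 : ℝ) < N := by exact_mod_cast hN
        have h : ((i.val : ℝ) + 1) / N - (i.val : ℝ) / N = 1 / N := by field_simp; ring
        rw [h, ENNReal.toReal_ofReal (by positivity)]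

include hN in
lemma row_int (v : Fin N → ℝ) (t : ℝ) (f : ℝ → ℝ) (hf : Integrable f μI)
    (hfcell : ∀ j : Fin N,
      IntegrableOn f (Set.Icc ((j.val : ℝ) / N) (((j.val : ℝ) + 1) / N)) volume) :
    ∫ y, v (gridIdxF N hN y) * (t - f y) ∂μI
      = ∑ j : Fin N, v j * ((1/N) * t
          - ∫ x in Set.Icc ((j.val : ℝ) / N) (((j.val : ℝ) + 1) / N), f x) := by
  have hint : Integrable (fun y => v (gridIdxF N hN y) * (t - f y)) μI := by
    have h1 : Integrable (fun y => t - f y) μI := (integrable_const _).sub hf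
    have h2 : AEStronglyMeasurable (fun y => v (gridIdxF N hN y)) μI :=
      ((measurable_of_countable v).comp (measurable_gridIdxF N hN)).aestronglyMeasurable
    refine h1.bdd_mul h2 (c := ∑ j : Fin N, |v j|) (Eventually.of_forall fun y => ?_)
    rw [Real.norm_eq_abs]
    exact Finset.single_le_sum (f := fun j => |v j|) (fun j _ => abs_nonneg _) (Finset.mem_univ _)
  rw [sum_cells N hN (fun j y => v j * (t - f y)) hint]
  apply Finset.sum_congr rfl
  intro j _
  rw [integral_const_mul]
  congr 1
  rw [integral_sub (by simpa using (integrable_const t).integrableOn) (hfcell j)]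
  rw [setIntegral_const, smul_eq_mul, measureReal_def, cellvol N hN j]

include hN in
lemma double_split (g : Fin N → Fin N → ℝ) (f : ℝ → ℝ) (hf : Integrable f μI) :
    ∫ z, g (gridIdxF N hN z.1) (gridIdxF N hN z.2) * (f z.1 - f z.2) ∂μsq
      = (1 / N) * ∑ i : Fin N, ∑ j : Fin N, g i j *
          ((∫ x in Set.Icc ((i.val : ℝ) / N) (((i.val : ℝ) + 1) / N), f x)
            - ∫ x in Set.Icc ((j.val : ℝ) / N) (((j.val : ℝ) + 1) / N), f x) := by
  have hN' : (0 : ℝ) < N := by exact_mod_cast hN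
  have hfcell : ∀ j : Fin N,
      IntegrableOn f (Set.Icc ((j.val : ℝ) / N) (((j.val : ℝ) + 1) / N)) volume := by
    intro j
    apply (show IntegrableOn f (Set.Icc (0:ℝ) 1) volume from hf).mono_set
    apply Set.Icc_subset_Icc
    · positivity
    · rw [div_le_one hN']
      have hj : ((j.val : ℝ) + 1) ≤ N := by exact_mod_cast j.isLt
      linarith
  have hbd : ∀ a b : Fin N, ‖g a b‖ ≤ ∑ i : Fin N, ∑ j : Fin N, |g i j| := pix2_bound N hN g
  have hgm : AEStronglyMeasurable
      (fun z : ℝ × ℝ => g (gridIdxF N hN z.1) (gridIdxF N hN z.2)) μsq :=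
    (meas_pix2 N hN g).aestronglyMeasurable
  have hsub : Integrable (fun z : ℝ × ℝ => f z.1 - f z.2) μsq :=
    (integrable_fst' hf).sub (integrable_snd' hf)
  have hF : Integrable
      (fun z : ℝ × ℝ => g (gridIdxF N hN z.1) (gridIdxF N hN z.2) * (f z.1 - f z.2)) μsq :=
    hsub.bdd_mul hgm (Eventually.of_forall fun z => hbd _ _)
  have houter : Integrable (fun x => ∑ j : Fin N, g (gridIdxF N hN x) j *
      ((1/N) * f x - ∫ s in Set.Icc ((j.val : ℝ) / N) (((j.val : ℝ) + 1) / N), f s)) μI := by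
    apply integrable_finset_sum
    intro j _
    have h1 : Integrable (fun x => (1/N) * f x
        - ∫ s in Set.Icc ((j.val : ℝ) / N) (((j.val : ℝ) + 1) / N), f s) μI :=
      (hf.const_mul _).sub (integrable_const _)
    have h2 : AEStronglyMeasurable (fun x => g (gridIdxF N hN x) j) μI :=
      ((measurable_of_countable (fun a : Fin N => g a j)).comp
        (measurable_gridIdxF N hN)).aestronglyMeasurable
    exact h1.bdd_mul h2 (Eventually.of_forall fun x => hbd _ _)
  calc ∫ z, g (gridIdxF N hN z.1) (gridIdxF N hN z.2) * (f z.1 - f z.2) ∂μsq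
      = ∫ x, (∫ y, g (gridIdxF N hN x) (gridIdxF N hN y) * (f x - f y) ∂μI) ∂μI := by
        rw [μsq] at hF ⊢
        exact integral_prod _ hF
    _ = ∫ x, (∑ j : Fin N, g (gridIdxF N hN x) j * ((1/N) * f x
          - ∫ s in Set.Icc ((j.val : ℝ) / N) (((j.val : ℝ) + 1) / N), f s)) ∂μI := by
        apply integral_congr_ae
        exact Eventually.of_forall fun x =>
          row_int N hN (fun a => g (gridIdxF N hN x) a) (f x) f hf hfcell
    _ = ∑ i : Fin N, ∫ x in Set.Icc ((i.val : ℝ) / N) (((i.val : ℝ) + 1) / N),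
          (∑ j : Fin N, g i j * ((1/N) * f x
            - ∫ s in Set.Icc ((j.val : ℝ) / N) (((j.val : ℝ) + 1) / N), f s)) :=
        sum_cells N hN (fun i x => ∑ j : Fin N, g i j * ((1/N) * f x
          - ∫ s in Set.Icc ((j.val : ℝ) / N) (((j.val : ℝ) + 1) / N), f s)) houter
    _ = ∑ i : Fin N, ∑ j : Fin N, g i j *
          ((1/N) * (∫ s in Set.Icc ((i.val : ℝ) / N) (((i.val : ℝ) + 1) / N), f s)
            - (1/N) * ∫ s in Set.Icc ((j.val : ℝ) / N) (((j.val : ℝ) + 1) / N), f s) := by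
        apply Finset.sum_congr rfl
        intro i _
        rw [integral_finset_sum]
        · apply Finset.sum_congr rfl
          intro j _
          rw [integral_const_mul]
          congr 1
          rw [integral_sub ((hfcell i).const_mul _)
            (by simpa using (integrable_const (∫ s in Set.Icc ((j.val : ℝ) / N)
              (((j.val : ℝ) + 1) / N), f s)).integrableOn)]
          rw [integral_const_mul, setIntegral_const, smul_eq_mul, measureReal_def, cellvol N hN i]
        · intro j _
          exact (((hfcell i).const_mul _).sub
            (by simpa using (integrable_const (∫ s in Set.Icc ((j.val : ℝ) / N)
              (((j.val : ℝ) + 1) / N), f s)).integrableOn)).const_mul _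
    _ = (1 / N) * ∑ i : Fin N, ∑ j : Fin N, g i j *
          ((∫ x in Set.Icc ((i.val : ℝ) / N) (((i.val : ℝ) + 1) / N), f x)
            - ∫ x in Set.Icc ((j.val : ℝ) / N) (((j.val : ℝ) + 1) / N), f x) := by
        rw [Finset.mul_sum]
        apply Finset.sum_congr rfl
        intro i _
        rw [Finset.mul_sum]
        apply Finset.sum_congr rfl
        intro j _
        ring

end Aux

noncomputable def cInt (N : ℕ) (f : ℝ → ℝ) (i : Fin N) : ℝ :=
  ∫ s in Set.Icc ((i.val : ℝ) / N) (((i.val : ℝ) + 1) / N), f s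

lemma cInt_eq (N : ℕ) (f : ℝ → ℝ) (i : Fin N) :
    (∫ s in Set.Icc ((i.val : ℝ) / N) (((i.val : ℝ) + 1) / N), f s) = cInt N f i := rfl


/-- For a piecewise constant kernel `Q^N[B]` and graphon `Q^N[W]`, the solution `p` of
the continuum weak Poisson equation projects to the semi-discrete solution:
`Z^N[p]` solves the semi-discrete equation, it coincides with the pixelation of the
vector `P` of its cell averages, and `P` is a zero-sum solution of the discrete
Kirchhoff law with conductivities `B` and sources `Sᵢ = ∫_{Iᵢᴺ} σ`. -/
theorem continuum_solution_projects (N : ℕ) (hN : 0 < N)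
    (r lam : ℝ) (hr : 0 < r) (hlam : 0 < lam)
    (σ : ℝ → ℝ) (hσ : MemLp σ 2 μI) (hσ0 : ∫ x, σ x ∂μI = 0)
    (W B : Fin N → Fin N → ℝ)
    (hW01 : ∀ i j, W i j = 0 ∨ W i j = 1) (hWsym : ∀ i j, W i j = W j i)
    (hconn : ∀ z : Fin N → ℝ, (∑ i, z i) = 0 →
      lam * N * ∑ i, (z i) ^ 2 ≤ ∑ i, ∑ j, (z i - z j) ^ 2 * W i j)
    (hBsym : ∀ i j, B i j = B j i)
    (hBr : ∀ i j, W i j = 1 → r ≤ B i j) (hB0 : ∀ i j, W i j = 0 → B i j = 0)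
    (p : ℝ → ℝ) (hp : MemLp p 2 μI) (hp0 : ∫ x, p x ∂μI = 0)
    (hsol : ∀ φ : ℝ → ℝ, MemLp φ 2 μI → (∫ x, φ x ∂μI) = 0 →
      (1 / 2) * ∫ z, pixM N hN B z * (p z.1 - p z.2) * (φ z.1 - φ z.2)
          * pixM N hN W z ∂μsq
        = ∫ x, σ x * φ x ∂μI) :
    (∀ Φ : Fin N → ℝ, (∑ i, Φ i = 0) →
      (1 / 2) * ∫ z, pixM N hN B z * (ZN1 N p z.1 - ZN1 N p z.2)
          * (pixV N hN Φ z.1 - pixV N hN Φ z.2) * pixM N hN W z ∂μsq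
        = ∫ x, σ x * pixV N hN Φ x ∂μI) ∧
    (∀ x : ℝ, ZN1 N p x
      = pixV N hN (fun i => (N : ℝ) *
          ∫ s in Set.Icc ((i.val : ℝ) / N) (((i.val : ℝ) + 1) / N), p s) x) ∧
    (∑ i : Fin N, ((N : ℝ) *
        ∫ s in Set.Icc ((i.val : ℝ) / N) (((i.val : ℝ) + 1) / N), p s) = 0) ∧
    (∀ i : Fin N, -(1 / (N : ℝ) ^ 2) * ∑ j, W i j * B i j *
          (((N : ℝ) * ∫ s in Set.Icc ((j.val : ℝ) / N) (((j.val : ℝ) + 1) / N), p s)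
            - ((N : ℝ) * ∫ s in Set.Icc ((i.val : ℝ) / N) (((i.val : ℝ) + 1) / N), p s))
        = ∫ x in Set.Icc ((i.val : ℝ) / N) (((i.val : ℝ) + 1) / N), σ x) := by
  have hN' : (0 : ℝ) < N := by exact_mod_cast hN
  have hpint : Integrable p μI := hp.integrable one_le_two
  have hσint : Integrable σ μI := hσ.integrable one_le_two
  -- facts about pixV
  have hVmeas : ∀ V : Fin N → ℝ, Measurable (pixV N hN V) := fun V =>
    (measurable_of_countable V).comp (measurable_gridIdxF N hN)
  have hVbd : ∀ (V : Fin N → ℝ) (x : ℝ), ‖pixV N hN V x‖ ≤ ∑ i : Fin N, |V i| := by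
    intro V x
    rw [Real.norm_eq_abs]
    exact Finset.single_le_sum (f := fun i => |V i|) (fun i _ => abs_nonneg _) (Finset.mem_univ _)
  have hVmem : ∀ V : Fin N → ℝ, MemLp (pixV N hN V) 2 μI := fun V =>
    MemLp.of_bound (hVmeas V).aestronglyMeasurable _ (Eventually.of_forall (hVbd V))
  have hVint : ∀ V : Fin N → ℝ, Integrable (pixV N hN V) μI := fun V =>
    (hVmem V).integrable one_le_two
  have hVavg : ∀ V : Fin N → ℝ, ∫ x, pixV N hN V x ∂μI = (1 / N) * ∑ i : Fin N, V i := by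
    intro V
    calc ∫ x, pixV N hN V x ∂μI
        = ∑ i : Fin N, ∫ x in Set.Icc ((i.val : ℝ) / N) (((i.val : ℝ) + 1) / N), V i :=
          sum_cells N hN (fun i _ => V i) (hVint V)
      _ = ∑ i : Fin N, (1 / N) * V i := by
          apply Finset.sum_congr rfl
          intro i _
          rw [setIntegral_const, smul_eq_mul, measureReal_def, cellvol N hN i]
      _ = (1 / N) * ∑ i : Fin N, V i := by rw [Finset.mul_sum]
  have hVmean0 : ∀ V : Fin N → ℝ, (∑ i, V i = 0) → ∫ x, pixV N hN V x ∂μI = 0 := by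
    intro V hV
    rw [hVavg V, hV, mul_zero]
  have hσpair : ∀ V : Fin N → ℝ,
      ∫ x, σ x * pixV N hN V x ∂μI = ∑ i : Fin N, cInt N σ i * V i := by
    intro V
    have hint : Integrable (fun x => σ x * pixV N hN V x) μI := by
      have h1 : Integrable (fun x => pixV N hN V x * σ x) μI :=
        hσint.bdd_mul (hVmeas V).aestronglyMeasurable (Eventually.of_forall (hVbd V))
      exact h1.congr (Eventually.of_forall fun x => mul_comm _ _)
    calc ∫ x, σ x * pixV N hN V x ∂μI
        = ∑ i : Fin N, ∫ x in Set.Icc ((i.val : ℝ) / N) (((i.val : ℝ) + 1) / N), σ x * V i :=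
          sum_cells N hN (fun i x => σ x * V i) hint
      _ = ∑ i : Fin N, cInt N σ i * V i := by
          apply Finset.sum_congr rfl
          intro i _
          rw [integral_mul_const, cInt_eq]
  -- key discrete identity
  have hkey : ∀ Φ : Fin N → ℝ, (∑ i, Φ i = 0) →
      (1 / 2) * ((1 / (N : ℝ)) * ∑ i : Fin N, ∑ j : Fin N,
          B i j * (Φ i - Φ j) * W i j * (cInt N p i - cInt N p j))
        = ∑ i : Fin N, cInt N σ i * Φ i := by
    intro Φ hΦ
    have h1 := hsol (pixV N hN Φ) (hVmem Φ) (hVmean0 Φ hΦ)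
    have h2 : ∫ z, pixM N hN B z * (p z.1 - p z.2)
          * (pixV N hN Φ z.1 - pixV N hN Φ z.2) * pixM N hN W z ∂μsq
        = ∫ z, B (gridIdxF N hN z.1) (gridIdxF N hN z.2)
            * (Φ (gridIdxF N hN z.1) - Φ (gridIdxF N hN z.2))
            * W (gridIdxF N hN z.1) (gridIdxF N hN z.2) * (p z.1 - p z.2) ∂μsq := by
      apply integral_congr_ae
      refine Eventually.of_forall fun z => ?_
      simp only [pixM, pixV]
      ring
    rw [h2, double_split N hN (fun a b => B a b * (Φ a - Φ b) * W a b) p hpint] at h1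
    simp only [cInt_eq] at h1
    rw [hσpair Φ] at h1
    exact h1
  -- conjunct 2
  have conj2 : ∀ x : ℝ, ZN1 N p x
      = pixV N hN (fun i => (N : ℝ) *
          ∫ s in Set.Icc ((i.val : ℝ) / N) (((i.val : ℝ) + 1) / N), p s) x := fun x => rfl
  have hZfun : ZN1 N p = pixV N hN (fun i => (N : ℝ) * cInt N p i) := funext conj2
  have hZint : Integrable (ZN1 N p) μI := by rw [hZfun]; exact hVint _
  have hcellZ : ∀ i : Fin N, cInt N (ZN1 N p) i = cInt N p i := by
    intro i
    rw [show cInt N (ZN1 N p) i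
        = ∫ x in Set.Icc ((i.val : ℝ) / N) (((i.val : ℝ) + 1) / N), ZN1 N p x from rfl]
    rw [hZfun, cell_const N hN _ i]
    field_simp
  -- conjunct 1
  have conj1 : ∀ Φ : Fin N → ℝ, (∑ i, Φ i = 0) →
      (1 / 2) * ∫ z, pixM N hN B z * (ZN1 N p z.1 - ZN1 N p z.2)
          * (pixV N hN Φ z.1 - pixV N hN Φ z.2) * pixM N hN W z ∂μsq
        = ∫ x, σ x * pixV N hN Φ x ∂μI := by
    intro Φ hΦ
    have e1 : ∫ z, pixM N hN B z * (ZN1 N p z.1 - ZN1 N p z.2)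
          * (pixV N hN Φ z.1 - pixV N hN Φ z.2) * pixM N hN W z ∂μsq
        = ∫ z, B (gridIdxF N hN z.1) (gridIdxF N hN z.2)
            * (Φ (gridIdxF N hN z.1) - Φ (gridIdxF N hN z.2))
            * W (gridIdxF N hN z.1) (gridIdxF N hN z.2) * (ZN1 N p z.1 - ZN1 N p z.2) ∂μsq := by
      apply integral_congr_ae
      refine Eventually.of_forall fun z => ?_
      simp only [pixM, pixV]
      ring
    rw [e1, double_split N hN (fun a b => B a b * (Φ a - Φ b) * W a b) (ZN1 N p) hZint]
    simp only [cInt_eq, hcellZ]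
    rw [hσpair Φ]
    exact hkey Φ hΦ
  -- conjunct 3
  have conj3 : ∑ i : Fin N, ((N : ℝ) *
      ∫ s in Set.Icc ((i.val : ℝ) / N) (((i.val : ℝ) + 1) / N), p s) = 0 := by
    rw [← Finset.mul_sum, ← splitI N hN p hpint, hp0, mul_zero]
  refine ⟨conj1, conj2, conj3, ?_⟩
  -- conjunct 4
  intro i
  simp only [cInt_eq]
  have hSsum : ∑ a : Fin N, cInt N σ a = 0 := by
    simp only [← cInt_eq]
    rw [← splitI N hN σ hσint, hσ0]
  set Φ : Fin N → ℝ := fun a => (if a = i then (1 : ℝ) else 0) - 1 / N with hΦdef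
  have hΦsum : ∑ a, Φ a = 0 := by
    rw [hΦdef]
    rw [Finset.sum_sub_distrib]
    rw [Finset.sum_ite_eq' Finset.univ i (fun _ => (1 : ℝ))]
    simp [Finset.card_univ]
    field_simp; ring
  have hk := hkey Φ hΦsum
  -- simplify the double sum
  have hterm : ∀ a b : Fin N,
      B a b * (Φ a - Φ b) * W a b * (cInt N p a - cInt N p b)
        = (if a = i then B a b * W a b * (cInt N p a - cInt N p b) else 0)
          - (if b = i then B a b * W a b * (cInt N p a - cInt N p b) else 0) := by
    intro a b
    rw [hΦdef]
    rcases eq_or_ne a i with ha | ha <;> rcases eq_or_ne b i with hb | hb <;>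
      simp [ha, hb] <;> ring
  have hpull : ∀ a : Fin N,
      ∑ b : Fin N, (if a = i then B a b * W a b * (cInt N p a - cInt N p b) else 0)
        = if a = i then ∑ b : Fin N, B a b * W a b * (cInt N p a - cInt N p b) else 0 := by
    intro a
    split_ifs <;> simp
  have hsum : ∑ a : Fin N, ∑ b : Fin N,
        B a b * (Φ a - Φ b) * W a b * (cInt N p a - cInt N p b)
      = 2 * ∑ j : Fin N, B i j * W i j * (cInt N p i - cInt N p j) := by
    simp only [hterm, Finset.sum_sub_distrib, hpull]
    rw [Finset.sum_ite_eq' Finset.univ i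
      (fun a => ∑ b : Fin N, B a b * W a b * (cInt N p a - cInt N p b))]
    simp only [Finset.mem_univ, if_true]
    have h2 : ∑ a : Fin N, ∑ b : Fin N,
          (if b = i then B a b * W a b * (cInt N p a - cInt N p b) else 0)
        = ∑ a : Fin N, B a i * W a i * (cInt N p a - cInt N p i) := by
      apply Finset.sum_congr rfl
      intro a _
      rw [Finset.sum_ite_eq' Finset.univ i
        (fun b => B a b * W a b * (cInt N p a - cInt N p b))]
      simp
    rw [h2]
    have h3 : ∑ a : Fin N, B a i * W a i * (cInt N p a - cInt N p i)
        = -∑ a : Fin N, B i a * W i a * (cInt N p i - cInt N p a) := by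
      rw [← Finset.sum_neg_distrib]
      apply Finset.sum_congr rfl
      intro a _
      rw [hBsym a i, hWsym a i]
      ring
    rw [h3]
    ring
  rw [hsum] at hk
  -- simplify RHS of hk
  have hrhs : ∑ a : Fin N, cInt N σ a * Φ a = cInt N σ i := by
    rw [hΦdef]
    simp only [mul_sub, mul_ite, mul_one, mul_zero, Finset.sum_sub_distrib]
    rw [Finset.sum_ite_eq' Finset.univ i (fun a => cInt N σ a)]
    simp only [Finset.mem_univ, if_true]
    rw [← Finset.sum_mul, hSsum, zero_mul, sub_zero]
  rw [hrhs] at hk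
  have hk2 : (1 / (N : ℝ)) * ∑ j : Fin N, B i j * W i j * (cInt N p i - cInt N p j)
      = cInt N σ i := by
    rw [← hk]; ring
  calc -(1 / (N : ℝ) ^ 2) * ∑ j, W i j * B i j *
        ((N : ℝ) * cInt N p j - (N : ℝ) * cInt N p i)
      = (1 / (N : ℝ)) * ∑ j : Fin N, B i j * W i j * (cInt N p i - cInt N p j) := by
        rw [Finset.mul_sum, Finset.mul_sum]
        apply Finset.sum_congr rfl
        intro j _
        field_simp
        ring
    _ = cInt N σ i := hk2
end

section
/- Uniform energy bound for minimizers: let B^N minimize the rescaled discrete energy F^N over the set of symmetric matrices with entries ≥ r on edges and 0 off edges. Under the connectivity assumption with constant λ and the bound L^N_{ij} ≤ 1, one has F^N[B^N] ≤ (4/(rλ^2)) ∫_0^1 σ(x)^2 dx + (ν/(2γ)) r^γ for every N. -/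
open MeasureTheory Set Filter

set_option maxHeartbeats 1000000 in
private lemma aux_lam_le_two (N : ℕ) (hN2 : 2 ≤ N) (lam : ℝ) (W : Fin N → Fin N → ℝ)
    (hW01 : ∀ i j, W i j = 0 ∨ W i j = 1)
    (hconn : ∀ z : Fin N → ℝ, (∑ i, z i) = 0 →
      lam * N * ∑ i, (z i) ^ 2 ≤ ∑ i, ∑ j, (z i - z j) ^ 2 * W i j) :
    lam ≤ 2 := by
  have hNR : (0:ℝ) < N := by
    have : 0 < N := by omega
    exact_mod_cast this
  set i0 : Fin N := ⟨0, by omega⟩ with hi0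
  set i1 : Fin N := ⟨1, by omega⟩ with hi1
  have hne : i0 ≠ i1 := by
    intro h
    have := congrArg Fin.val h
    simp [hi0, hi1] at this
  set z : Fin N → ℝ := fun k => (if k = i0 then (1:ℝ) else 0) - (if k = i1 then 1 else 0)
    with hzdef
  have hz0 : ∑ i, z i = 0 := by
    simp [hzdef, Finset.sum_sub_distrib]
  have hz2 : ∑ i, (z i)^2 = 2 := by
    have hzz : ∀ k, (z k)^2 = (if k = i0 then (1:ℝ) else 0) + (if k = i1 then 1 else 0) := by
      intro k
      have hne' : i1 ≠ i0 := Ne.symm hne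
      by_cases h0 : k = i0
      · by_cases h1 : k = i1
        · exact absurd (h0.symm.trans h1) hne
        · simp [hzdef, h0, hne, hne']
      · by_cases h1 : k = i1
        · simp [hzdef, h0, h1, hne, hne']

        · simp [hzdef, h0, h1]
    rw [Finset.sum_congr rfl fun k _ => hzz k, Finset.sum_add_distrib]
    simp
    norm_num
  have hup : (∑ i, ∑ j, (z i - z j)^2 * W i j) ≤ ∑ i, ∑ j, (z i - z j)^2 := by
    refine Finset.sum_le_sum fun i _ => Finset.sum_le_sum fun j _ => ?_
    rcases hW01 i j with h | h
    · rw [h, mul_zero]; positivity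
    · rw [h, mul_one]
  have hexp : (∑ i, ∑ j, (z i - z j)^2) = 4 * N := by
    have hrow : ∀ i, (∑ j, (z i - z j)^2)
        = (N:ℝ) * (z i)^2 - 2 * z i * (∑ j, z j) + ∑ j, (z j)^2 := by
      intro i
      have hpt : ∀ j, (z i - z j)^2 = (z i)^2 - 2 * z i * z j + (z j)^2 := fun j => by ring
      rw [Finset.sum_congr rfl fun j _ => hpt j, Finset.sum_add_distrib,
        Finset.sum_sub_distrib, Finset.sum_const, Finset.card_univ, Fintype.card_fin,
        ← Finset.mul_sum]
      simp [nsmul_eq_mul]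
    rw [Finset.sum_congr rfl fun i _ => hrow i]
    rw [hz0, hz2]
    simp only [mul_zero, sub_zero]
    rw [Finset.sum_add_distrib, ← Finset.mul_sum, Finset.sum_const, Finset.card_univ,
      Fintype.card_fin, hz2]
    simp [nsmul_eq_mul]
    ring
  have hc := hconn z hz0
  rw [hz2] at hc
  have hc' : lam * N * 2 ≤ 4 * N := le_trans hc (hup.trans_eq hexp)
  nlinarith


set_option maxHeartbeats 2000000 in
/-- Uniform energy bound for minimizers of the rescaled discrete energy: if `Bopt`
minimizes `F^N` over the admissible set (symmetric, `≥ r` on edges, `0` off edges),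
then `F^N[Bopt] ≤ (4/(rλ²)) ∫ σ² + (ν/(2γ)) r^γ`. -/
theorem minimizer_energy_bound (N : ℕ) (hN : 0 < N)
    (γ ν r lam : ℝ) (hγ : 1 < γ) (hν : 0 < ν) (hr : 0 < r) (hlam : 0 < lam)
    (σ : ℝ → ℝ) (hσ : MemLp σ 2 μI) (hσ0 : ∫ x, σ x ∂μI = 0)
    (W L : Fin N → Fin N → ℝ)
    (hW01 : ∀ i j, W i j = 0 ∨ W i j = 1) (hWsym : ∀ i j, W i j = W j i)
    (hconn : ∀ z : Fin N → ℝ, (∑ i, z i) = 0 →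
      lam * N * ∑ i, (z i) ^ 2 ≤ ∑ i, ∑ j, (z i - z j) ^ 2 * W i j)
    (hLsym : ∀ i j, L i j = L j i) (hLpos : ∀ i j, 0 < L i j) (hL1 : ∀ i j, L i j ≤ 1)
    (adm : (Fin N → Fin N → ℝ) → Prop)
    (hadm : ∀ B, adm B ↔ ((∀ i j, B i j = B j i) ∧
      ∀ i j, (W i j = 1 → r ≤ B i j) ∧ (W i j = 0 → B i j = 0)))
    (P : (Fin N → Fin N → ℝ) → (Fin N → ℝ))
    (hP : ∀ B, adm B → (∑ i, P B i = 0) ∧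
      ∀ i : Fin N, -(1 / (N : ℝ) ^ 2) * ∑ j, W i j * B i j * (P B j - P B i)
        = ∫ x in Set.Icc ((i.val : ℝ) / N) (((i.val : ℝ) + 1) / N), σ x)
    (FN : (Fin N → Fin N → ℝ) → ℝ)
    (hFN : ∀ B, FN B = (1 / (2 * (N : ℝ) ^ 2)) * ∑ i, ∑ j,
      (B i j * (P B j - P B i) ^ 2 + (ν / γ) * B i j ^ γ * L i j ^ (γ + 1)) * W i j)
    (Bopt : Fin N → Fin N → ℝ) (hBopt : adm Bopt)
    (hmin : ∀ B, adm B → FN Bopt ≤ FN B) :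
    FN Bopt ≤ (4 / (r * lam ^ 2)) * (∫ x, (σ x) ^ 2 ∂μI) + (ν / (2 * γ)) * r ^ γ := by
  have hNR : (0:ℝ) < (N:ℝ) := by exact_mod_cast hN
  -- competitor
  set B : Fin N → Fin N → ℝ := fun i j => r * W i j with hBdef
  have hB : adm B := by
    rw [hadm]
    refine ⟨fun i j => by simp only [B, hWsym i j], fun i j => ⟨fun h => by simp [B, h], fun h => by simp [B, h]⟩⟩
  set Q : Fin N → ℝ := P B with hQdef
  obtain ⟨hQ0, hQeq⟩ := hP B hB
  set S : Fin N → ℝ := fun i =>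
    ∫ x in Set.Icc ((i.val : ℝ) / N) (((i.val : ℝ) + 1) / N), σ x with hSdef
  set E : ℝ := ∑ i, ∑ j, (Q j - Q i) ^ 2 * W i j with hEdef
  have hWnn : ∀ i j, 0 ≤ W i j := fun i j => by rcases hW01 i j with h | h <;> simp [h]
  have hEnn : 0 ≤ E := Finset.sum_nonneg fun i _ => Finset.sum_nonneg fun j _ =>
    mul_nonneg (sq_nonneg _) (hWnn i j)
  set Sig2 : ℝ := ∫ x, (σ x) ^ 2 ∂μI with hSig2def
  have hSig2nn : 0 ≤ Sig2 := integral_nonneg fun x => sq_nonneg _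
  -- Step B: ∑ S Q = (r/(2N²)) E
  have hSQ : ∑ i, S i * Q i = (r / (2 * (N:ℝ)^2)) * E := by
    have hstep : ∀ i, S i * Q i = ∑ j, (-(r/(N:ℝ)^2)) * (W i j * ((Q j - Q i) * Q i)) := by
      intro i
      have hSi : S i = -(1 / (N : ℝ) ^ 2) * ∑ j, W i j * B i j * (Q j - Q i) :=
        (hQeq i).symm
      rw [hSi, Finset.mul_sum, Finset.sum_mul]
      refine Finset.sum_congr rfl fun j _ => ?_
      rcases hW01 i j with h | h <;> simp only [hBdef, h] <;> ring
    have hT2 : 2 * (∑ i, ∑ j, W i j * ((Q j - Q i) * Q i)) = - E := by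
      have h1 : (∑ i, ∑ j, W i j * ((Q j - Q i) * Q i))
          = ∑ i, ∑ j, W i j * ((Q i - Q j) * Q j) := by
        rw [Finset.sum_comm]
        refine Finset.sum_congr rfl fun j _ => Finset.sum_congr rfl fun i _ => ?_
        rw [hWsym i j]
      have h2 : E = ∑ i, ∑ j, -(W i j * ((Q j - Q i) * Q i) + W i j * ((Q i - Q j) * Q j)) := by
        rw [hEdef]
        exact Finset.sum_congr rfl fun i _ => Finset.sum_congr rfl fun j _ => by ring
      have h3 : (∑ i, ∑ j, -(W i j * ((Q j - Q i) * Q i) + W i j * ((Q i - Q j) * Q j)))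
          = -((∑ i, ∑ j, W i j * ((Q j - Q i) * Q i))
              + (∑ i, ∑ j, W i j * ((Q i - Q j) * Q j))) := by
        simp [Finset.sum_add_distrib]
      rw [h2, h3, ← h1]; ring
    have hNe : ((N:ℝ))^2 ≠ 0 := by positivity
    calc ∑ i, S i * Q i = ∑ i, ∑ j, (-(r/(N:ℝ)^2)) * (W i j * ((Q j - Q i) * Q i)) :=
          Finset.sum_congr rfl fun i _ => hstep i
      _ = (-(r/(N:ℝ)^2)) * ∑ i, ∑ j, W i j * ((Q j - Q i) * Q i) := by
          simp_rw [← Finset.mul_sum]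
      _ = (r / (2 * (N:ℝ)^2)) * E := by
          have hT : (∑ i, ∑ j, W i j * ((Q j - Q i) * Q i)) = -E/2 := by linarith
          rw [hT]; ring
  -- connectivity for Q
  have hQ2 : lam * N * ∑ i, (Q i)^2 ≤ E := by
    have := hconn Q hQ0
    calc lam * N * ∑ i, (Q i)^2 ≤ ∑ i, ∑ j, (Q i - Q j)^2 * W i j := this
      _ = E := by
          rw [hEdef]
          exact Finset.sum_congr rfl fun i _ => Finset.sum_congr rfl fun j _ => by ring
  -- L² Cauchy-Schwarz per interval + summation
  have hSsum : ∑ i, (S i)^2 ≤ (1 / (N:ℝ)) * Sig2 := by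
    haveI : IsFiniteMeasure μI := by
      constructor
      simp only [μI, Measure.restrict_apply_univ, Real.volume_Icc]
      exact ENNReal.ofReal_lt_top
    have hσ2int : Integrable (fun x => σ x ^ 2) μI := hσ.integrable_sq
    have hσint : Integrable σ μI := hσ.integrable (by norm_num)
    set A : Fin N → Set ℝ := fun i => Set.Icc ((i.val:ℝ)/N) (((i.val:ℝ)+1)/N) with hAdef
    have hAsub : ∀ i, A i ⊆ Set.Icc (0:ℝ) 1 := by
      intro i
      apply Set.Icc_subset_Icc
      · positivity
      · rw [div_le_one hNR]
        have : (i.val:ℝ) + 1 ≤ (N:ℝ) := by exact_mod_cast i.isLt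
        exact this
    have hres : ∀ i, μI.restrict (A i) = volume.restrict (A i) := by
      intro i
      simp only [μI]
      exact Measure.restrict_restrict_of_subset (hAsub i)
    have hσ2A : ∀ i, IntegrableOn (fun x => σ x^2) (A i) volume := by
      intro i; rw [IntegrableOn, ← hres i]; exact hσ2int.restrict
    have hσA : ∀ i, IntegrableOn σ (A i) volume := by
      intro i; rw [IntegrableOn, ← hres i]; exact hσint.restrict
    have hvolA : ∀ i, (volume (A i)).toReal = 1 / (N:ℝ) := by
      intro i
      rw [hAdef]
      simp only [Real.volume_Icc]
      rw [ENNReal.toReal_ofReal_eq_iff.mpr]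
      · field_simp; ring
      · have : ((i.val:ℝ) + 1) / N - (i.val:ℝ) / N = 1 / N := by field_simp; ring
        rw [this]; positivity
    have hSJ : ∀ i, (S i)^2 ≤ (1/(N:ℝ)) * ∫ x in A i, σ x^2 := by
      intro i
      set J : ℝ := ∫ x in A i, σ x^2 with hJdef
      have hJnn : 0 ≤ J := integral_nonneg fun x => sq_nonneg _
      have hbound : ∀ c : ℝ, 0 < c → |S i| ≤ c/(2*(N:ℝ)) + J/(2*c) := by
        intro c hc
        have h1 : |S i| ≤ ∫ x in A i, |σ x| := by
          have := norm_integral_le_integral_norm (μ := volume.restrict (A i)) σ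
          simpa [Real.norm_eq_abs] using this
        have h2 : (∫ x in A i, |σ x|) ≤ ∫ x in A i, (c/2 + σ x^2/(2*c)) := by
          apply integral_mono (hσA i).abs
          · exact (integrable_const _).add ((hσ2A i).div_const _)
          · intro x
            have h3 : 0 ≤ (|σ x| - c)^2 := sq_nonneg _
            have h4 : |σ x|^2 = σ x^2 := sq_abs _
            simp only [Pi.add_apply]
            rw [div_add_div _ _ (by norm_num : (2:ℝ) ≠ 0) (by positivity : 2*c ≠ 0)]
            rw [le_div_iff₀ (by positivity : (0:ℝ) < 2*(2*c))]
            nlinarith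
        have h5 : (∫ x in A i, (c/2 + σ x^2/(2*c))) = c/(2*N) + J/(2*c) := by
          rw [integral_add (integrable_const _) ((hσ2A i).div_const _)]
          rw [setIntegral_const, integral_div, measureReal_def, hvolA i, smul_eq_mul, hJdef]
          ring
        linarith
      rcases eq_or_lt_of_le hJnn with hJ0 | hJpos
      · have hS0 : |S i| ≤ 0 := by
          by_contra hcon
          push_neg at hcon
          have hb := hbound ((N:ℝ) * |S i|) (by positivity)
          rw [← hJ0] at hb
          have : (N:ℝ) * |S i| / (2*N) = |S i| / 2 := by field_simp
          rw [this] at hb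
          simp at hb
          linarith
        have : S i = 0 := abs_eq_zero.mp (le_antisymm hS0 (abs_nonneg _))
        rw [this, ← hJ0]
        norm_num
      · set c : ℝ := Real.sqrt ((N:ℝ) * J) with hcdef
        have hcpos : 0 < c := Real.sqrt_pos.mpr (by positivity)
        have hc2 : c^2 = (N:ℝ) * J := Real.sq_sqrt (by positivity)
        have heq : c/(2*(N:ℝ)) + J/(2*c) = c / N := by
          field_simp
          nlinarith [hc2]
        have h1 : |S i| ≤ c / N := by
          have := hbound c hcpos
          linarith [heq ▸ this]
        calc (S i)^2 = |S i|^2 := (sq_abs _).symm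
          _ ≤ (c/N)^2 := by
              apply pow_le_pow_left₀ (abs_nonneg _) h1
          _ = (1/(N:ℝ)) * J := by
              rw [div_pow, hc2]; field_simp
    have hJsum : (∑ i, ∫ x in A i, σ x^2) ≤ Sig2 := by
      set t : Fin N → Set ℝ := fun i => Set.Ioc ((i.val:ℝ)/N) (((i.val:ℝ)+1)/N) with htdef
      have hIccIoc : ∀ i, (∫ x in A i, σ x^2) = ∫ x in t i, σ x^2 := fun i =>
        integral_Icc_eq_integral_Ioc
      have htA : ∀ i, t i ⊆ A i := fun i => Set.Ioc_subset_Icc_self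
      have hmeas : ∀ i, MeasurableSet (t i) := fun i => measurableSet_Ioc
      have hdisj : Pairwise (Function.onFun Disjoint t) := by
        intro i j hij
        have hij' : i.val ≠ j.val := fun h => hij (Fin.ext h)
        rw [Function.onFun, htdef]
        rw [Set.Ioc_disjoint_Ioc]
        rcases Nat.lt_or_ge i.val j.val with h | h
        · have hle : ((i.val:ℝ) + 1) / N ≤ (j.val:ℝ) / N := by
            have : (i.val:ℝ) + 1 ≤ (j.val:ℝ) := by exact_mod_cast h
            gcongr
          exact le_trans (min_le_left _ _) (le_trans hle (le_max_right _ _))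
        · have h' : j.val < i.val := lt_of_le_of_ne h (Ne.symm hij')
          have hle : ((j.val:ℝ) + 1) / N ≤ (i.val:ℝ) / N := by
            have : (j.val:ℝ) + 1 ≤ (i.val:ℝ) := by exact_mod_cast h'
            gcongr
          exact le_trans (min_le_right _ _) (le_trans hle (le_max_left _ _))
      have hint : ∀ i, IntegrableOn (fun x => σ x^2) (t i) volume := fun i =>
        (hσ2A i).mono_set (htA i)
      have hsum_eq : (∑ i, ∫ x in t i, σ x^2) = ∫ x in ⋃ i, t i, σ x^2 :=
        (integral_iUnion_fintype hmeas hdisj hint).symm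
      have hSig2eq : Sig2 = ∫ x in Set.Icc (0:ℝ) 1, σ x^2 := by
        rw [hSig2def]; simp only [μI]
      have hUsub : (⋃ i, t i) ⊆ Set.Icc (0:ℝ) 1 :=
        Set.iUnion_subset fun i => (htA i).trans (hAsub i)
      have hmono : (∫ x in ⋃ i, t i, σ x^2) ≤ ∫ x in Set.Icc (0:ℝ) 1, σ x^2 := by
        apply setIntegral_mono_set
        · show IntegrableOn (fun x => σ x^2) (Set.Icc (0:ℝ) 1) volume
          exact hσ2int
        · exact Eventually.of_forall fun x => sq_nonneg _
        · exact HasSubset.Subset.eventuallyLE hUsub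
      calc (∑ i, ∫ x in A i, σ x^2) = ∑ i, ∫ x in t i, σ x^2 :=
            Finset.sum_congr rfl fun i _ => hIccIoc i
        _ = ∫ x in ⋃ i, t i, σ x^2 := hsum_eq
        _ ≤ ∫ x in Set.Icc (0:ℝ) 1, σ x^2 := hmono
        _ = Sig2 := hSig2eq.symm
    calc ∑ i, (S i)^2 ≤ ∑ i, (1/(N:ℝ)) * ∫ x in A i, σ x^2 :=
          Finset.sum_le_sum fun i _ => hSJ i
      _ = (1/(N:ℝ)) * ∑ i, ∫ x in A i, σ x^2 := (Finset.mul_sum _ _ _).symm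
      _ ≤ (1/(N:ℝ)) * Sig2 := by
          apply mul_le_mul_of_nonneg_left hJsum (by positivity)
  -- main first-term bound
  have hfirst : (r / (2 * (N:ℝ)^2)) * E ≤ (4 / (r * lam^2)) * Sig2 := by
    rcases eq_or_lt_of_le hEnn with hE0 | hEpos
    · rw [← hE0, mul_zero]
      positivity
    · have hN2 : 2 ≤ N := by
        by_contra hcon
        push_neg at hcon
        have hone : ∀ i j : Fin N, i = j := by
          intro i j; apply Fin.ext; omega
        have hE0' : E = 0 := by
          rw [hEdef]
          apply Finset.sum_eq_zero; intro i _
          apply Finset.sum_eq_zero; intro j _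
          rw [hone i j, sub_self]
          simp
        linarith
      have hlam2 : lam ≤ 2 := aux_lam_le_two N hN2 lam W hW01 hconn
      have hCS : (∑ i, S i * Q i)^2 ≤ (∑ i, (S i)^2) * (∑ i, (Q i)^2) :=
        Finset.sum_mul_sq_le_sq_mul_sq _ _ _
      set t : ℝ := (r / (2 * (N:ℝ)^2)) * E with htdef
      have htpos : 0 < t := mul_pos (by positivity) hEpos
      have hQsqnn : 0 ≤ ∑ i, (Q i)^2 := Finset.sum_nonneg fun i _ => sq_nonneg _
      have hQsq : (∑ i, (Q i)^2) ≤ E / (lam * N) := by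
        rw [le_div_iff₀ (by positivity)]
        linarith [hQ2]
      have hSsqnn : 0 ≤ ∑ i, (S i)^2 := Finset.sum_nonneg fun i _ => sq_nonneg _
      have ht2 : t^2 ≤ ((1/(N:ℝ)) * Sig2) * (E / (lam * N)) := by
        calc t^2 = (∑ i, S i * Q i)^2 := by rw [htdef, hSQ]
          _ ≤ (∑ i, (S i)^2) * (∑ i, (Q i)^2) := hCS
          _ ≤ ((1/(N:ℝ)) * Sig2) * (E / (lam * N)) :=
              mul_le_mul hSsum hQsq hQsqnn (by positivity)
      have hE_t : E = t * (2 * (N:ℝ)^2 / r) := by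
        rw [htdef]; field_simp
      have ht3 : t * t ≤ ((2 / (r * lam)) * Sig2) * t := by
        calc t * t = t^2 := (sq t).symm
          _ ≤ ((1/(N:ℝ)) * Sig2) * ((t * (2 * (N:ℝ)^2 / r)) / (lam * N)) := by
              rw [← hE_t]; exact ht2
          _ = ((2 / (r * lam)) * Sig2) * t := by field_simp
      have ht4 : t ≤ (2 / (r * lam)) * Sig2 := le_of_mul_le_mul_right ht3 htpos
      calc t ≤ (2 / (r * lam)) * Sig2 := ht4
        _ ≤ (4 / (r * lam^2)) * Sig2 := by
            apply mul_le_mul_of_nonneg_right ?_ hSig2nn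
            rw [div_le_div_iff₀ (by positivity) (by positivity)]
            nlinarith [mul_nonneg (mul_nonneg hr.le hlam.le) (sub_nonneg.mpr hlam2)]
  -- bound FN B
  have hFNB : FN B ≤ (r / (2 * (N:ℝ)^2)) * E + (ν / (2*γ)) * r ^ γ := by
    have hγ0 : (0:ℝ) < γ := by linarith
    have hrγ : (0:ℝ) < r ^ γ := Real.rpow_pos_of_pos hr γ
    have hpt : ∀ i j, (B i j * (P B j - P B i)^2 + (ν/γ) * B i j ^ γ * L i j ^ (γ+1)) * W i j
        ≤ r * ((P B j - P B i)^2 * W i j) + (ν/γ) * r ^ γ := by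
      intro i j
      rcases hW01 i j with h | h
      · rw [h, mul_zero, mul_zero, mul_zero]
        positivity
      · have hB1 : B i j = r := by simp [hBdef, h]
        rw [h, mul_one, mul_one, hB1]
        have hL : L i j ^ (γ+1) ≤ 1 :=
          Real.rpow_le_one (hLpos i j).le (hL1 i j) (by linarith)
        have hmul : (ν/γ) * r^γ * L i j ^ (γ+1) ≤ (ν/γ) * r^γ * 1 :=
          mul_le_mul_of_nonneg_left hL (by positivity)
        rw [mul_one] at hmul
        linarith
    have hsum : (∑ i, ∑ j, (B i j * (P B j - P B i)^2
          + (ν/γ) * B i j ^ γ * L i j ^ (γ+1)) * W i j)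
        ≤ r * E + ((ν/γ) * r^γ) * (N:ℝ)^2 := by
      calc (∑ i, ∑ j, (B i j * (P B j - P B i)^2 + (ν/γ) * B i j ^ γ * L i j ^ (γ+1)) * W i j)
          ≤ ∑ i, ∑ j, (r * ((P B j - P B i)^2 * W i j) + (ν/γ) * r ^ γ) :=
            Finset.sum_le_sum fun i _ => Finset.sum_le_sum fun j _ => hpt i j
        _ = r * (∑ i, ∑ j, (P B j - P B i)^2 * W i j) + ((ν/γ) * r^γ) * (N:ℝ)^2 := by
            simp [Finset.sum_add_distrib, ← Finset.mul_sum, Finset.sum_const,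
              Finset.card_univ]
            try ring
        _ = r * E + ((ν/γ) * r^γ) * (N:ℝ)^2 := by
            rw [hEdef]
    rw [hFN B]
    have hle := mul_le_mul_of_nonneg_left hsum
      (by positivity : (0:ℝ) ≤ 1 / (2 * (N:ℝ)^2))
    calc 1 / (2 * (N:ℝ)^2) * (∑ i, ∑ j, (B i j * (P B j - P B i)^2
            + (ν/γ) * B i j ^ γ * L i j ^ (γ+1)) * W i j)
        ≤ 1 / (2 * (N:ℝ)^2) * (r * E + ((ν/γ) * r^γ) * (N:ℝ)^2) := hle
      _ = (r / (2 * (N:ℝ)^2)) * E + (ν / (2*γ)) * r ^ γ := by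
          field_simp
  calc FN Bopt ≤ FN B := hmin B hB
    _ ≤ (r / (2 * (N:ℝ)^2)) * E + (ν / (2*γ)) * r ^ γ := hFNB
    _ ≤ (4 / (r * lam^2)) * Sig2 + (ν / (2*γ)) * r ^ γ := by linarith
end
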